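/- arXiv:math/0511553 — 2 statements merged into one kernel-verified Lean document; each statement's English description precedes it below -/
import Mathlib

section
/- The sum on the right-hand side of Theorem 3.1 is direct: if Σ_{p∈Ī₂∪J₃∪I₅} c_p ∂_{t_p} + d_μ + ad u = 0 as a linear operator on 𝒦, where c_p∈F, μ∈Hom*_ℤ(Γ,F), and u∈𝒦, then c_p=0 for all p, μ=0, and u=0. -/
noncomputable section

/-- `ι_i = ℓ₁ + ⋯ + ℓ_i`. -/
def iot (ℓ : ℕ → ℕ) (i : ℕ) : ℕ := ∑ k ∈ Finset.Icc 1 i, ℓ k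

/-- `I_{i,j} = {ι_{i-1}+1, …, ι_j}`. -/
def iSet (ℓ : ℕ → ℕ) (i j : ℕ) : Finset ℕ := Finset.Icc (iot ℓ (i - 1) + 1) (iot ℓ j)

/-- The index-shift map `p ↦ p̄` (shift by `ι₆`). -/
def bar (ℓ : ℕ → ℕ) (p : ℕ) : ℕ := if p ≤ iot ℓ 6 then p + iot ℓ 6 else p - iot ℓ 6

/-- `K̄ = {p̄ : p ∈ K}`. -/
def barSet (ℓ : ℕ → ℕ) (K : Finset ℕ) : Finset ℕ := K.image (bar ℓ)

/-- `J_{i,j} = I_{i,j} ∪ Ī_{i,j}`. -/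
def jSet (ℓ : ℕ → ℕ) (i j : ℕ) : Finset ℕ := iSet ℓ i j ∪ barSet ℓ (iSet ℓ i j)

/-- The semigroup `𝒥 = 𝒥₀ × 𝒥₁`, encoded as functions `ℕ → ℕ`; `j0 = true`
means `𝒥₀ = ℕ` and `j0 = false` means `𝒥₀ = {0}`. -/
def jIdx (ℓ : ℕ → ℕ) (j0 : Bool) : Set (ℕ → ℕ) :=
  {i | (j0 = false → i 0 = 0) ∧
    ∀ p, 1 ≤ p →
      (p ∈ iSet ℓ 1 2 ∪ iSet ℓ 4 4 ∪ barSet ℓ (iSet ℓ 1 1) ∨ 2 * iot ℓ 6 < p) → i p = 0}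

/-- `σ_p` (with `σ_p = σ_{p̄}`). -/
def sgm (F : Type*) [Field F] (ℓ : ℕ → ℕ) (p : ℕ) : ℕ → F :=
  let q := if p ≤ iot ℓ 6 then p else p - iot ℓ 6
  if q ∈ iSet ℓ 1 3 then -Pi.single q (1 : F) - Pi.single (q + iot ℓ 6) (1 : F)
  else if q ∈ iSet ℓ 4 5 then -Pi.single q (1 : F)
  else 0

/-- The underlying space `𝒜`: the free `F`-module with basis `Γ × 𝒥`. -/
abbrev CA (F : Type*) [Field F] (ℓ : ℕ → ℕ) (Γ : AddSubgroup (ℕ → F)) (j0 : Bool) : Type _ :=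
  (↥Γ × ↥(jIdx ℓ j0)) →₀ F

/-- The basis monomial `x^{α,i⃗}`, with the convention that it is `0` if `(α,i⃗) ∉ Γ × 𝒥`. -/
def X (F : Type*) [Field F] (ℓ : ℕ → ℕ) (Γ : AddSubgroup (ℕ → F)) (j0 : Bool)
    (α : ℕ → F) (i : ℕ → ℕ) : CA F ℓ Γ j0 :=
  @dite _ (α ∈ Γ ∧ i ∈ jIdx ℓ j0) (Classical.dec _)
    (fun h => Finsupp.single (⟨α, h.1⟩, ⟨i, h.2⟩) 1) (fun _ => 0)

variable (F : Type*) [Field F] (ℓ : ℕ → ℕ) (Γ : AddSubgroup (ℕ → F)) (j0 : Bool)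

/-- The commutative associative product on `𝒜`. -/
def mulA (u v : CA F ℓ Γ j0) : CA F ℓ Γ j0 :=
  u.sum fun a ca => v.sum fun b cb =>
    (ca * cb) • X F ℓ Γ j0 (a.1.1 + b.1.1) (a.2.1 + b.2.1)

/-- The grading operator `∂*_p`. -/
def pstar (p : ℕ) (u : CA F ℓ Γ j0) : CA F ℓ Γ j0 :=
  u.sum fun a ca => (ca * a.1.1 p) • Finsupp.single a 1

/-- The down-grading operator `∂_{t_p}`. -/
def pt (p : ℕ) (u : CA F ℓ Γ j0) : CA F ℓ Γ j0 :=
  u.sum fun a ca => (ca * (a.2.1 p : F)) • X F ℓ Γ j0 a.1.1 (a.2.1 - Pi.single p 1)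

/-- `∂_p = ∂*_p + ∂_{t_p}`. -/
def dd (p : ℕ) (u : CA F ℓ Γ j0) : CA F ℓ Γ j0 := pstar F ℓ Γ j0 p u + pt F ℓ Γ j0 p u

/-- `∂ = Σ_{p∈J_{1,3}∪I_{4,5}} ∂*_p + Σ_{p∈I₆∪Ī_{4,6}} t_p ∂_{t_p}`. -/
def Dop (u : CA F ℓ Γ j0) : CA F ℓ Γ j0 :=
  (∑ p ∈ jSet ℓ 1 3 ∪ iSet ℓ 4 5, pstar F ℓ Γ j0 p u) +
    ∑ p ∈ iSet ℓ 6 6 ∪ barSet ℓ (iSet ℓ 4 6),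
      mulA F ℓ Γ j0 (X F ℓ Γ j0 0 (Pi.single p 1)) (pt F ℓ Γ j0 p u)

/-- The contact bracket (2.18):
`[u,v] = Σ_{p∈I} x^{σ_p}(∂_p u·∂_{p̄} v − ∂_{p̄} u·∂_p v) + (2−∂)(u)·∂₀(v) − ∂₀(u)·(2−∂)(v)`. -/
def brk (u v : CA F ℓ Γ j0) : CA F ℓ Γ j0 :=
  (∑ p ∈ iSet ℓ 1 6,
      mulA F ℓ Γ j0 (X F ℓ Γ j0 (sgm F ℓ p) 0)
        (mulA F ℓ Γ j0 (dd F ℓ Γ j0 p u) (dd F ℓ Γ j0 (bar ℓ p) v) -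
          mulA F ℓ Γ j0 (dd F ℓ Γ j0 (bar ℓ p) u) (dd F ℓ Γ j0 p v))) +
    mulA F ℓ Γ j0 ((2 : F) • u - Dop F ℓ Γ j0 u) (dd F ℓ Γ j0 0 v) -
    mulA F ℓ Γ j0 (dd F ℓ Γ j0 0 u) ((2 : F) • v - Dop F ℓ Γ j0 v)


/-- For a function `μ : Γ → F`, the diagonal linear map `d_μ : x^{α,i⃗} ↦ μ(α)x^{α,i⃗}`. -/
def dmu (μ : ↥Γ → F) (u : CA F ℓ Γ j0) : CA F ℓ Γ j0 :=
  u.sum fun a ca => (ca * μ a.1) • Finsupp.single a 1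

/-- Evaluation of the `p`-th coordinate, as an additive homomorphism `Γ →+ F`. -/
def coordHom (F : Type*) [Field F] (Γ : AddSubgroup (ℕ → F)) (p : ℕ) : ↥Γ →+ F :=
  (Pi.evalAddMonoidHom (fun _ : ℕ => F) p).comp Γ.subtype

/-- `Hom'_ℤ(Γ,F)`: additive homomorphisms `μ : Γ → F` with `μ(σ_p) = 0` for `p ∈ I_{1,5}`. -/
def homPrime (F : Type*) [Field F] (ℓ : ℕ → ℕ) (Γ : AddSubgroup (ℕ → F)) :
    Submodule F (↥Γ →+ F) where
  carrier := {μ | ∀ p ∈ iSet ℓ 1 5, ∀ h : sgm F ℓ p ∈ Γ, μ ⟨sgm F ℓ p, h⟩ = 0}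
  add_mem' := by
    intro a b ha hb p hp h
    simp [ha p hp h, hb p hp h]
  zero_mem' := by intro p hp h; simp
  smul_mem' := by
    intro c a ha p hp h
    simp [ha p hp h]

/-- `μ_p(α) = α_{p̄} − α_p` for `p ∈ I_{1,3}`. -/
def muP (F : Type*) [Field F] (ℓ : ℕ → ℕ) (Γ : AddSubgroup (ℕ → F)) (p : ℕ) : ↥Γ →+ F :=
  coordHom F Γ (bar ℓ p) - coordHom F Γ p

/-- `μ₀`: equal to `α ↦ α₀` if `𝒥₀ = {0}`, and `0` if `𝒥₀ = ℕ`. -/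
def muZero (F : Type*) [Field F] (Γ : AddSubgroup (ℕ → F)) (j0 : Bool) : ↥Γ →+ F :=
  if j0 then 0 else coordHom F Γ 0

/-- `span{μ_p : p ∈ {0} ∪ I_{1,3}}`. -/
def spanMu (F : Type*) [Field F] (ℓ : ℕ → ℕ) (Γ : AddSubgroup (ℕ → F)) (j0 : Bool) :
    Submodule F (↥Γ →+ F) :=
  Submodule.span F (insert (muZero F Γ j0) ((muP F ℓ Γ) '' ↑(iSet ℓ 1 3)))

section AuxLemmas

variable {F : Type*} [Field F] {ℓ : ℕ → ℕ} {Γ : AddSubgroup (ℕ → F)} {j0 : Bool}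

lemma X_pos {α : ℕ → F} {i : ℕ → ℕ} (h1 : α ∈ Γ) (h2 : i ∈ jIdx ℓ j0) :
    X F ℓ Γ j0 α i = Finsupp.single (⟨α, h1⟩, ⟨i, h2⟩) 1 := by
  rw [X, dif_pos ⟨h1, h2⟩]

lemma X_neg {α : ℕ → F} {i : ℕ → ℕ} (h : ¬(α ∈ Γ ∧ i ∈ jIdx ℓ j0)) :
    X F ℓ Γ j0 α i = 0 := by
  rw [X, dif_neg h]

lemma zero_mem_jIdx : (0 : ℕ → ℕ) ∈ jIdx ℓ j0 :=
  ⟨fun _ => rfl, fun _ _ _ => rfl⟩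

lemma add_mem_jIdx {i j : ℕ → ℕ} (hi : i ∈ jIdx ℓ j0) (hj : j ∈ jIdx ℓ j0) :
    i + j ∈ jIdx ℓ j0 := by
  refine ⟨fun h => ?_, fun p hp hP => ?_⟩
  · simp [Pi.add_apply, hi.1 h, hj.1 h]
  · simp [Pi.add_apply, hi.2 p hp hP, hj.2 p hp hP]

lemma le_mem_jIdx {i j : ℕ → ℕ} (hij : ∀ p, j p ≤ i p) (hi : i ∈ jIdx ℓ j0) :
    j ∈ jIdx ℓ j0 := by
  refine ⟨fun h => ?_, fun p hp hP => ?_⟩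
  · exact Nat.le_zero.1 ((hij 0).trans_eq (hi.1 h))
  · exact Nat.le_zero.1 ((hij p).trans_eq (hi.2 p hp hP))

lemma sub_single_mem_jIdx {i : ℕ → ℕ} (hi : i ∈ jIdx ℓ j0) (p : ℕ) :
    i - Pi.single p 1 ∈ jIdx ℓ j0 :=
  le_mem_jIdx (fun q => Nat.sub_le _ _) hi

lemma X_apply_basis (a : ↥Γ × ↥(jIdx ℓ j0)) :
    X F ℓ Γ j0 a.1.1 a.2.1 = Finsupp.single a 1 := by
  rw [X_pos a.1.2 a.2.2]

end AuxLemmas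
section MulLemmas

variable {F : Type*} [Field F] {ℓ : ℕ → ℕ} {Γ : AddSubgroup (ℕ → F)} {j0 : Bool}

lemma mulA_zero (u : CA F ℓ Γ j0) : mulA F ℓ Γ j0 u 0 = 0 := by
  simp [mulA, Finsupp.sum]

lemma zero_mulA (u : CA F ℓ Γ j0) : mulA F ℓ Γ j0 0 u = 0 := by
  simp [mulA, Finsupp.sum]

lemma mulA_comm (u v : CA F ℓ Γ j0) : mulA F ℓ Γ j0 u v = mulA F ℓ Γ j0 v u := by
  simp only [mulA, Finsupp.sum]
  rw [Finset.sum_comm]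
  refine Finset.sum_congr rfl fun b _ => Finset.sum_congr rfl fun a _ => ?_
  rw [mul_comm, add_comm b.1.1, add_comm b.2.1]

lemma add_mulA (u v w : CA F ℓ Γ j0) :
    mulA F ℓ Γ j0 (u + v) w = mulA F ℓ Γ j0 u w + mulA F ℓ Γ j0 v w := by
  simp only [mulA]
  refine Finsupp.sum_add_index' (fun a => ?_) (fun a c1 c2 => ?_)
  · simp
  · rw [← Finsupp.sum_add]
    refine Finsupp.sum_congr fun b _ => ?_
    rw [add_mul, add_smul]

lemma smul_mulA (r : F) (u v : CA F ℓ Γ j0) :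
    mulA F ℓ Γ j0 (r • u) v = r • mulA F ℓ Γ j0 u v := by
  simp only [mulA]
  rw [Finsupp.sum_smul_index' (fun a => by simp), Finsupp.smul_sum]
  refine Finsupp.sum_congr fun a _ => ?_
  rw [Finsupp.smul_sum]
  refine Finsupp.sum_congr fun b _ => ?_
  rw [smul_eq_mul, mul_assoc, smul_smul]

lemma mulA_add (u v w : CA F ℓ Γ j0) :
    mulA F ℓ Γ j0 u (v + w) = mulA F ℓ Γ j0 u v + mulA F ℓ Γ j0 u w := by
  rw [mulA_comm, add_mulA, mulA_comm v, mulA_comm w]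

lemma mulA_smul (r : F) (u v : CA F ℓ Γ j0) :
    mulA F ℓ Γ j0 u (r • v) = r • mulA F ℓ Γ j0 u v := by
  rw [mulA_comm, smul_mulA, mulA_comm]

lemma mulA_sub (u v w : CA F ℓ Γ j0) :
    mulA F ℓ Γ j0 u (v - w) = mulA F ℓ Γ j0 u v - mulA F ℓ Γ j0 u w := by
  have := mulA_add u (v - w) w; rw [sub_add_cancel] at this
  rw [this]; abel

lemma sub_mulA (u v w : CA F ℓ Γ j0) :
    mulA F ℓ Γ j0 (u - v) w = mulA F ℓ Γ j0 u w - mulA F ℓ Γ j0 v w := by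
  rw [mulA_comm, mulA_sub, mulA_comm w, mulA_comm w]

lemma mulA_single (a : ↥Γ × ↥(jIdx ℓ j0)) (r : F) (v : CA F ℓ Γ j0) :
    mulA F ℓ Γ j0 (Finsupp.single a r) v =
      v.sum fun b cb => (r * cb) • X F ℓ Γ j0 (a.1.1 + b.1.1) (a.2.1 + b.2.1) := by
  rw [mulA, Finsupp.sum_single_index]
  simp [Finsupp.sum]

lemma mulA_X_X {α β : ℕ → F} {i j : ℕ → ℕ} (hα : α ∈ Γ) (hi : i ∈ jIdx ℓ j0)
    (hβ : β ∈ Γ) (hj : j ∈ jIdx ℓ j0) :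
    mulA F ℓ Γ j0 (X F ℓ Γ j0 α i) (X F ℓ Γ j0 β j) = X F ℓ Γ j0 (α + β) (i + j) := by
  rw [X_pos hα hi, X_pos hβ hj, mulA_single, Finsupp.sum_single_index] <;> simp

lemma mulA_XX_left {α : ℕ → F} {i : ℕ → ℕ} (hα : α ∈ Γ) (hi : i ∈ jIdx ℓ j0)
    (v : CA F ℓ Γ j0) :
    mulA F ℓ Γ j0 (X F ℓ Γ j0 α i) v =
      v.sum fun b cb => cb • X F ℓ Γ j0 (α + b.1.1) (i + b.2.1) := by
  rw [X_pos hα hi, mulA_single]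
  simp

lemma one_mulA (v : CA F ℓ Γ j0) : mulA F ℓ Γ j0 (X F ℓ Γ j0 0 0) v = v := by
  rw [mulA_XX_left Γ.zero_mem zero_mem_jIdx]
  conv_rhs => rw [← Finsupp.sum_single v]
  refine Finset.sum_congr rfl fun b _ => ?_
  simp only [zero_add, X_apply_basis, Finsupp.smul_single, smul_eq_mul, mul_one]

lemma mulA_one (v : CA F ℓ Γ j0) : mulA F ℓ Γ j0 v (X F ℓ Γ j0 0 0) = v := by
  rw [mulA_comm, one_mulA]

lemma shift_shift {β γ : ℕ → F} (hβ : β ∈ Γ) (hγ : γ ∈ Γ) (v : CA F ℓ Γ j0) :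
    mulA F ℓ Γ j0 (X F ℓ Γ j0 β 0) (mulA F ℓ Γ j0 (X F ℓ Γ j0 γ 0) v) =
      mulA F ℓ Γ j0 (X F ℓ Γ j0 (β + γ) 0) v := by
  induction v using Finsupp.induction_linear with
  | zero => rw [mulA_zero, mulA_zero, mulA_zero]
  | add u v hu hv => rw [mulA_add, mulA_add, mulA_add, hu, hv]
  | single a r =>
    rw [← Finsupp.smul_single_one, mulA_smul, mulA_smul, mulA_smul]
    congr 1
    rw [← X_apply_basis a, mulA_X_X hγ zero_mem_jIdx a.1.2 a.2.2, zero_add,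
      mulA_X_X hβ zero_mem_jIdx (Γ.add_mem hγ a.1.2) a.2.2, zero_add,
      mulA_X_X (Γ.add_mem hβ hγ) zero_mem_jIdx a.1.2 a.2.2, zero_add, add_assoc]

lemma shift_cancel {β : ℕ → F} (hβ : β ∈ Γ) (v : CA F ℓ Γ j0) :
    mulA F ℓ Γ j0 (X F ℓ Γ j0 (-β) 0) (mulA F ℓ Γ j0 (X F ℓ Γ j0 β 0) v) = v := by
  rw [shift_shift (Γ.neg_mem hβ) hβ, neg_add_cancel, one_mulA]

lemma shift_inj {β : ℕ → F} (hβ : β ∈ Γ) {v w : CA F ℓ Γ j0}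
    (h : mulA F ℓ Γ j0 (X F ℓ Γ j0 β 0) v = mulA F ℓ Γ j0 (X F ℓ Γ j0 β 0) w) : v = w := by
  rw [← shift_cancel hβ v, h, shift_cancel hβ]

end MulLemmas
section OpLemmas

variable {F : Type*} [Field F] {ℓ : ℕ → ℕ} {Γ : AddSubgroup (ℕ → F)} {j0 : Bool}

lemma pstar_zero (p : ℕ) : pstar F ℓ Γ j0 p 0 = 0 := by simp [pstar, Finsupp.sum]

lemma pt_zero (p : ℕ) : pt F ℓ Γ j0 p 0 = 0 := by simp [pt, Finsupp.sum]

lemma dd_zero (p : ℕ) : dd F ℓ Γ j0 p 0 = 0 := by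
  rw [dd, pstar_zero, pt_zero, add_zero]

lemma pstar_X {α : ℕ → F} {i : ℕ → ℕ} (p : ℕ) :
    pstar F ℓ Γ j0 p (X F ℓ Γ j0 α i) = α p • X F ℓ Γ j0 α i := by
  by_cases h : α ∈ Γ ∧ i ∈ jIdx ℓ j0
  · rw [X_pos h.1 h.2, pstar, Finsupp.sum_single_index (by simp)]
    rw [one_mul, ← X_pos h.1 h.2]
  · rw [X_neg h, pstar_zero, smul_zero]

lemma pt_X {α : ℕ → F} {i : ℕ → ℕ} (h1 : α ∈ Γ) (h2 : i ∈ jIdx ℓ j0) (p : ℕ) :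
    pt F ℓ Γ j0 p (X F ℓ Γ j0 α i) =
      (i p : F) • X F ℓ Γ j0 α (i - Pi.single p 1) := by
  rw [X_pos h1 h2, pt, Finsupp.sum_single_index (by simp), one_mul]

lemma dd_X {α : ℕ → F} {i : ℕ → ℕ} (h1 : α ∈ Γ) (h2 : i ∈ jIdx ℓ j0) (p : ℕ) :
    dd F ℓ Γ j0 p (X F ℓ Γ j0 α i) =
      α p • X F ℓ Γ j0 α i + (i p : F) • X F ℓ Γ j0 α (i - Pi.single p 1) := by
  rw [dd, pstar_X, pt_X h1 h2]

lemma dd_X0 {α : ℕ → F} (h1 : α ∈ Γ) (p : ℕ) :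
    dd F ℓ Γ j0 p (X F ℓ Γ j0 α 0) = α p • X F ℓ Γ j0 α 0 := by
  rw [dd_X h1 zero_mem_jIdx]
  norm_num

lemma pstar_add (p : ℕ) (u v : CA F ℓ Γ j0) :
    pstar F ℓ Γ j0 p (u + v) = pstar F ℓ Γ j0 p u + pstar F ℓ Γ j0 p v := by
  simp only [pstar]
  refine Finsupp.sum_add_index' (fun a => by simp) (fun a c1 c2 => by rw [add_mul, add_smul])

lemma pt_add (p : ℕ) (u v : CA F ℓ Γ j0) :
    pt F ℓ Γ j0 p (u + v) = pt F ℓ Γ j0 p u + pt F ℓ Γ j0 p v := by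
  simp only [pt]
  refine Finsupp.sum_add_index' (fun a => by simp) (fun a c1 c2 => by rw [add_mul, add_smul])

lemma pstar_smul (p : ℕ) (r : F) (u : CA F ℓ Γ j0) :
    pstar F ℓ Γ j0 p (r • u) = r • pstar F ℓ Γ j0 p u := by
  simp only [pstar]
  rw [Finsupp.sum_smul_index' (fun a => by simp), Finsupp.smul_sum]
  refine Finsupp.sum_congr fun a _ => ?_
  rw [smul_eq_mul, mul_assoc, smul_smul]

lemma pt_smul (p : ℕ) (r : F) (u : CA F ℓ Γ j0) :
    pt F ℓ Γ j0 p (r • u) = r • pt F ℓ Γ j0 p u := by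
  simp only [pt]
  rw [Finsupp.sum_smul_index' (fun a => by simp), Finsupp.smul_sum]
  refine Finsupp.sum_congr fun a _ => ?_
  rw [smul_eq_mul, mul_assoc, smul_smul]

lemma dd_add (p : ℕ) (u v : CA F ℓ Γ j0) :
    dd F ℓ Γ j0 p (u + v) = dd F ℓ Γ j0 p u + dd F ℓ Γ j0 p v := by
  rw [dd, dd, dd, pstar_add, pt_add]; abel

lemma dd_smul (p : ℕ) (r : F) (u : CA F ℓ Γ j0) :
    dd F ℓ Γ j0 p (r • u) = r • dd F ℓ Γ j0 p u := by
  rw [dd, dd, pstar_smul, pt_smul, smul_add]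

lemma dd_sub (p : ℕ) (u v : CA F ℓ Γ j0) :
    dd F ℓ Γ j0 p (u - v) = dd F ℓ Γ j0 p u - dd F ℓ Γ j0 p v := by
  have := dd_add p (u - v) v; rw [sub_add_cancel] at this; rw [this]; abel

lemma dmu_X (μ : ↥Γ → F) {α : ℕ → F} {i : ℕ → ℕ} (h1 : α ∈ Γ) (h2 : i ∈ jIdx ℓ j0) :
    dmu F ℓ Γ j0 μ (X F ℓ Γ j0 α i) = μ ⟨α, h1⟩ • X F ℓ Γ j0 α i := by
  rw [X_pos h1 h2, dmu, Finsupp.sum_single_index (by simp), one_mul]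

end OpLemmas
section IdxLemmas

variable {F : Type*} [Field F] {ℓ : ℕ → ℕ} {Γ : AddSubgroup (ℕ → F)} {j0 : Bool}

lemma iot_mono {i j : ℕ} (h : i ≤ j) : iot ℓ i ≤ iot ℓ j :=
  Finset.sum_le_sum_of_subset (Finset.Icc_subset_Icc le_rfl h)

lemma iot_zero : iot ℓ 0 = 0 := by simp [iot]

lemma mem_iSet16 {p : ℕ} (h : p ∈ iSet ℓ 1 6) : 1 ≤ p ∧ p ≤ iot ℓ 6 := by
  rw [iSet, Finset.mem_Icc] at h
  omega

lemma bar_of_le {p : ℕ} (h : p ≤ iot ℓ 6) : bar ℓ p = p + iot ℓ 6 := if_pos h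

lemma bar16 {p : ℕ} (h : p ∈ iSet ℓ 1 6) : bar ℓ p = p + iot ℓ 6 :=
  bar_of_le (mem_iSet16 h).2

/-- Master membership criterion for a single `t`-variable. -/
lemma single_mem_jIdx {q : ℕ}
    (hq : (iot ℓ 2 < q ∧ q ≤ iot ℓ 3) ∨ (iot ℓ 4 < q ∧ q ≤ iot ℓ 6) ∨
      (iot ℓ 6 + iot ℓ 1 < q ∧ q ≤ 2 * iot ℓ 6)) :
    (Pi.single q 1 : ℕ → ℕ) ∈ jIdx ℓ j0 := by
  have m12 : iot ℓ 1 ≤ iot ℓ 2 := iot_mono (by norm_num)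
  have m23 : iot ℓ 2 ≤ iot ℓ 3 := iot_mono (by norm_num)
  have m34 : iot ℓ 3 ≤ iot ℓ 4 := iot_mono (by norm_num)
  have m45 : iot ℓ 4 ≤ iot ℓ 5 := iot_mono (by norm_num)
  have m56 : iot ℓ 5 ≤ iot ℓ 6 := iot_mono (by norm_num)
  refine ⟨fun _ => Pi.single_eq_of_ne (by omega) 1, fun p hp hcond => ?_⟩
  rcases eq_or_ne p q with rfl | hne
  · exfalso
    rcases hcond with (hc | hc)
    · simp only [Finset.mem_union] at hc
      rcases hc with ((h | h) | h)
      · rw [iSet, Finset.mem_Icc, iot_zero] at h; omega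
      · rw [iSet, Finset.mem_Icc] at h; norm_num at h; omega
      · rw [barSet, Finset.mem_image] at h
        obtain ⟨p', hp', hpe⟩ := h
        rw [iSet, Finset.mem_Icc, iot_zero] at hp'
        rw [bar, if_pos (le_trans hp'.2 (by omega))] at hpe
        omega
    · omega
  · exact Pi.single_eq_of_ne hne 1

lemma sgm_13 {p : ℕ} (h : p ∈ iSet ℓ 1 3) :
    sgm F ℓ p = -Pi.single p 1 - Pi.single (p + iot ℓ 6) 1 := by
  have h3 : p ≤ iot ℓ 3 := (Finset.mem_Icc.1 h).2
  have h6 : p ≤ iot ℓ 6 := le_trans h3 (iot_mono (by norm_num))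
  rw [sgm]
  simp only [if_pos h6, if_pos h]

lemma sgm_45 {p : ℕ} (h : p ∈ iSet ℓ 4 5) : sgm F ℓ p = -Pi.single p 1 := by
  have hm := Finset.mem_Icc.1 h
  norm_num at hm
  have m34 : iot ℓ 3 ≤ iot ℓ 4 := iot_mono (by norm_num)
  have m56 : iot ℓ 5 ≤ iot ℓ 6 := iot_mono (by norm_num)
  have h6 : p ≤ iot ℓ 6 := by omega
  have hn : p ∉ iSet ℓ 1 3 := by
    rw [iSet, Finset.mem_Icc]; norm_num [iot_zero]; omega
  rw [sgm]
  simp only [if_pos h6, if_neg hn, if_pos h]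

lemma sgm_66 {p : ℕ} (h : p ∈ iSet ℓ 6 6) : sgm F ℓ p = 0 := by
  have hm := Finset.mem_Icc.1 h
  norm_num at hm
  have m34 : iot ℓ 3 ≤ iot ℓ 4 := iot_mono (by norm_num)
  have m45 : iot ℓ 4 ≤ iot ℓ 5 := iot_mono (by norm_num)
  have m23 : iot ℓ 2 ≤ iot ℓ 3 := iot_mono (by norm_num)
  have h6 : p ≤ iot ℓ 6 := by omega
  have hn : p ∉ iSet ℓ 1 3 := by rw [iSet, Finset.mem_Icc]; norm_num [iot_zero]; omega
  have hn2 : p ∉ iSet ℓ 4 5 := by rw [iSet, Finset.mem_Icc]; norm_num; omega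
  rw [sgm]
  simp only [if_pos h6, if_neg hn, if_neg hn2]

/-- splitting `I_{1,6}` -/
lemma iSet16_split {p : ℕ} (h : p ∈ iSet ℓ 1 6) :
    p ∈ iSet ℓ 1 3 ∨ p ∈ iSet ℓ 4 6 := by
  have m34 : iot ℓ 3 ≤ iot ℓ 4 := iot_mono (by norm_num)
  rw [iSet, Finset.mem_Icc] at h ⊢
  rw [iSet, Finset.mem_Icc]
  norm_num [iot_zero] at h ⊢
  omega

lemma iSet13_sub : (iSet ℓ 1 3 : Finset ℕ) ⊆ iSet ℓ 1 6 :=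
  Finset.Icc_subset_Icc le_rfl (iot_mono (by norm_num))

lemma iSet45_sub : (iSet ℓ 4 5 : Finset ℕ) ⊆ iSet ℓ 1 6 := by
  intro p hp
  rw [iSet, Finset.mem_Icc] at hp ⊢
  have : iot ℓ 5 ≤ iot ℓ 6 := iot_mono (by norm_num)
  norm_num [iot_zero] at hp ⊢
  omega

lemma iSet46_sub : (iSet ℓ 4 6 : Finset ℕ) ⊆ iSet ℓ 1 6 := by
  intro p hp
  rw [iSet, Finset.mem_Icc] at hp ⊢
  norm_num [iot_zero] at hp ⊢
  omega

end IdxLemmas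
section DopLemmas

variable {F : Type*} [Field F] {ℓ : ℕ → ℕ} {Γ : AddSubgroup (ℕ → F)} {j0 : Bool}

lemma sum_single_coord (s : Finset ℕ) (p : ℕ) (c : F) :
    ∑ q ∈ s, (Pi.single p c : ℕ → F) q = if p ∈ s then c else 0 := by
  simp [Pi.single_apply, Finset.sum_ite_eq']

lemma B_single_mem {p : ℕ} (hp : p ∈ iSet ℓ 6 6 ∪ barSet ℓ (iSet ℓ 4 6)) :
    (Pi.single p 1 : ℕ → ℕ) ∈ jIdx ℓ j0 := by
  have m13 : iot ℓ 1 ≤ iot ℓ 3 := iot_mono (by norm_num)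
  have m45 : iot ℓ 4 ≤ iot ℓ 5 := iot_mono (by norm_num)
  have m56 : iot ℓ 5 ≤ iot ℓ 6 := iot_mono (by norm_num)
  have m36 : iot ℓ 3 ≤ iot ℓ 6 := iot_mono (by norm_num)
  rcases Finset.mem_union.1 hp with h | h
  · rw [iSet, Finset.mem_Icc] at h
    norm_num at h
    exact single_mem_jIdx (Or.inr (Or.inl ⟨by omega, by omega⟩))
  · rw [barSet, Finset.mem_image] at h
    obtain ⟨p', hp', rfl⟩ := h
    rw [iSet, Finset.mem_Icc] at hp'
    norm_num at hp'
    rw [bar_of_le (by omega)]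
    exact single_mem_jIdx (Or.inr (Or.inr ⟨by omega, by omega⟩))

lemma Dop_X {α : ℕ → F} {i : ℕ → ℕ} (hα : α ∈ Γ) (hi : i ∈ jIdx ℓ j0) :
    Dop F ℓ Γ j0 (X F ℓ Γ j0 α i) =
      ((∑ p ∈ jSet ℓ 1 3 ∪ iSet ℓ 4 5, α p) +
        ∑ p ∈ iSet ℓ 6 6 ∪ barSet ℓ (iSet ℓ 4 6), (i p : F)) • X F ℓ Γ j0 α i := by
  rw [Dop, add_smul]
  congr 1
  · rw [Finset.sum_smul]
    exact Finset.sum_congr rfl fun p _ => pstar_X p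
  · rw [Finset.sum_smul]
    refine Finset.sum_congr rfl fun p hp => ?_
    rw [pt_X hα hi, mulA_smul,
      mulA_X_X Γ.zero_mem (B_single_mem hp) hα (sub_single_mem_jIdx hi p), zero_add]
    rcases Nat.eq_zero_or_pos (i p) with h0 | h1
    · rw [h0]; norm_num
    · congr 2
      funext q
      rcases eq_or_ne q p with rfl | hne
      · simp only [Pi.add_apply, Pi.sub_apply, Pi.single_eq_same]
        omega
      · simp [Pi.single_eq_of_ne hne]

lemma Dop_one : Dop F ℓ Γ j0 (X F ℓ Γ j0 0 0) = 0 := by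
  rw [Dop_X Γ.zero_mem zero_mem_jIdx]
  norm_num

lemma Dop_zero : Dop F ℓ Γ j0 0 = 0 := by
  rw [Dop]
  simp [pstar_zero, pt_zero, mulA_zero]

lemma Dop_add (u v : CA F ℓ Γ j0) :
    Dop F ℓ Γ j0 (u + v) = Dop F ℓ Γ j0 u + Dop F ℓ Γ j0 v := by
  simp only [Dop, pstar_add, pt_add, mulA_add, Finset.sum_add_distrib]
  abel

lemma Dop_smul (r : F) (u : CA F ℓ Γ j0) :
    Dop F ℓ Γ j0 (r • u) = r • Dop F ℓ Γ j0 u := by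
  simp only [Dop, pstar_smul, pt_smul, mulA_smul, ← Finset.smul_sum, smul_add]

lemma Dop_sub (u v : CA F ℓ Γ j0) :
    Dop F ℓ Γ j0 (u - v) = Dop F ℓ Γ j0 u - Dop F ℓ Γ j0 v := by
  have := Dop_add (u - v) v
  rw [sub_add_cancel] at this
  rw [this]; abel

/-- `g_p = x^{-σ_p}` for `p ∈ I_{1,3}`. -/
lemma Dop_g {p : ℕ} (hp : p ∈ iSet ℓ 1 3)
    (hg : (Pi.single p 1 + Pi.single (p + iot ℓ 6) 1 : ℕ → F) ∈ Γ) :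
    Dop F ℓ Γ j0 (X F ℓ Γ j0 (Pi.single p 1 + Pi.single (p + iot ℓ 6) 1) 0) =
      (2 : F) • X F ℓ Γ j0 (Pi.single p 1 + Pi.single (p + iot ℓ 6) 1) 0 := by
  rw [Dop_X hg zero_mem_jIdx]
  have h1 : p ∈ jSet ℓ 1 3 ∪ iSet ℓ 4 5 :=
    Finset.mem_union_left _ (Finset.mem_union_left _ hp)
  have h2 : p + iot ℓ 6 ∈ jSet ℓ 1 3 ∪ iSet ℓ 4 5 := by
    refine Finset.mem_union_left _ (Finset.mem_union_right _ ?_)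
    rw [barSet, Finset.mem_image]
    exact ⟨p, hp, by rw [bar_of_le (le_trans (Finset.mem_Icc.1 hp).2 (iot_mono (by norm_num)))]⟩
  congr 1
  simp only [Pi.add_apply, Finset.sum_add_distrib, sum_single_coord, if_pos h1, if_pos h2]
  norm_num

end DopLemmas
section EvalLemmas

variable {F : Type*} [Field F] {ℓ : ℕ → ℕ} {Γ : AddSubgroup (ℕ → F)} {j0 : Bool}

lemma pstar_apply (q : ℕ) (w : CA F ℓ Γ j0) (b : ↥Γ × ↥(jIdx ℓ j0)) :
    pstar F ℓ Γ j0 q w b = b.1.1 q * w b := by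
  classical
  rw [pstar, Finsupp.sum_apply, Finsupp.sum]
  have : ∀ a ∈ w.support,
      ((w a * a.1.1 q) • (Finsupp.single a 1 : CA F ℓ Γ j0)) b =
        if a = b then w a * a.1.1 q else 0 := by
    intro a _
    rw [Finsupp.smul_apply, Finsupp.single_apply]
    split <;> simp
  rw [Finset.sum_congr rfl this, Finset.sum_ite_eq']
  by_cases hb : b ∈ w.support
  · rw [if_pos hb, mul_comm]
  · rw [if_neg hb, Finsupp.notMem_support_iff.1 hb, mul_zero]

lemma pt_apply (q : ℕ) (w : CA F ℓ Γ j0) (b : ↥Γ × ↥(jIdx ℓ j0))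
    (hT : (b.2.1 + Pi.single q 1 : ℕ → ℕ) ∈ jIdx ℓ j0) :
    pt F ℓ Γ j0 q w b =
      ((b.2.1 q + 1 : ℕ) : F) * w (b.1, ⟨b.2.1 + Pi.single q 1, hT⟩) := by
  classical
  rw [pt, Finsupp.sum_apply, Finsupp.sum]
  set b' : ↥Γ × ↥(jIdx ℓ j0) := (b.1, ⟨b.2.1 + Pi.single q 1, hT⟩) with hb'
  rw [Finset.sum_eq_single b']
  · rw [X_pos b.1.2 (sub_single_mem_jIdx hT q)]
    have he : (b.2.1 + Pi.single q 1 - Pi.single q 1 : ℕ → ℕ) = b.2.1 := by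
      funext r
      rcases eq_or_ne r q with rfl | hr
      · simp only [Pi.sub_apply, Pi.add_apply, Pi.single_eq_same]; omega
      · simp [Pi.single_eq_of_ne hr]
    have hb2 : (b.1, (⟨b.2.1, b.2.2⟩ : ↥(jIdx ℓ j0))) = b := rfl
    simp only [hb', he, hb2, Finsupp.smul_apply, Finsupp.single_eq_same,
      Pi.add_apply, Pi.single_eq_same, smul_eq_mul, mul_one]
    try rw [mul_comm]
    try norm_num
  · intro a _ hne
    by_cases hz : a.2.1 q = 0
    · simp [hz]
    · rw [X_pos a.1.2 (sub_single_mem_jIdx a.2.2 q), Finsupp.smul_apply,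
        Finsupp.single_apply, if_neg, smul_zero]
      intro heq
      apply hne
      have h1 := congrArg Prod.fst heq
      have h2 : (a.2.1 - Pi.single q 1 : ℕ → ℕ) = b.2.1 :=
        congrArg (fun x => (x.2.1 : ℕ → ℕ)) heq
      have h3 : a.2.1 = b.2.1 + Pi.single q 1 := by
        funext r
        have := congrFun h2 r
        rcases eq_or_ne r q with rfl | hr
        · simp only [Pi.sub_apply, Pi.single_eq_same] at this ⊢
          simp only [Pi.add_apply, Pi.single_eq_same]
          omega
        · simp only [Pi.sub_apply, Pi.single_eq_of_ne hr] at this ⊢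
          simp [Pi.single_eq_of_ne hr, ← this]
      rw [hb']
      exact Prod.ext h1 (Subtype.ext h3)
  · intro hb'
    rw [Finsupp.notMem_support_iff.1 hb', zero_mul, zero_smul, Finsupp.zero_apply]

lemma pt_apply_not (q : ℕ) (w : CA F ℓ Γ j0) (b : ↥Γ × ↥(jIdx ℓ j0))
    (hT : (b.2.1 + Pi.single q 1 : ℕ → ℕ) ∉ jIdx ℓ j0) :
    pt F ℓ Γ j0 q w b = 0 := by
  classical
  rw [pt, Finsupp.sum_apply, Finsupp.sum]
  refine Finset.sum_eq_zero fun a _ => ?_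
  by_cases hz : a.2.1 q = 0
  · simp [hz]
  · rw [X_pos a.1.2 (sub_single_mem_jIdx a.2.2 q), Finsupp.smul_apply,
      Finsupp.single_apply, if_neg, smul_zero]
    intro heq
    apply hT
    have h2 : (a.2.1 - Pi.single q 1 : ℕ → ℕ) = b.2.1 :=
      congrArg (fun x => (x.2.1 : ℕ → ℕ)) heq
    have h3 : a.2.1 = b.2.1 + Pi.single q 1 := by
      funext r
      have := congrFun h2 r
      rcases eq_or_ne r q with rfl | hr
      · simp only [Pi.sub_apply, Pi.single_eq_same] at this ⊢
        simp only [Pi.add_apply, Pi.single_eq_same]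
        omega
      · simp only [Pi.sub_apply, Pi.single_eq_of_ne hr] at this ⊢
        simp [Pi.single_eq_of_ne hr, ← this]
    rw [← h3]
    exact a.2.2

lemma dd_supp_zero [CharZero F] {q : ℕ} {w : CA F ℓ Γ j0}
    (h : dd F ℓ Γ j0 q w = 0) :
    ∀ a ∈ w.support, a.1.1 q = 0 ∧ a.2.1 q = 0 := by
  classical
  have heval : ∀ b : ↥Γ × ↥(jIdx ℓ j0),
      pstar F ℓ Γ j0 q w b + pt F ℓ Γ j0 q w b = 0 := by
    intro b
    rw [← Finsupp.add_apply, ← dd, h, Finsupp.zero_apply]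
  -- Step A : first coordinates vanish on the support
  have stepA : ∀ a ∈ w.support, a.1.1 q = 0 := by
    by_contra hbad
    push_neg at hbad
    obtain ⟨a₀, ha₀, ha₀q⟩ := hbad
    have hne : (w.support.filter fun a => a.1.1 q ≠ 0).Nonempty :=
      ⟨a₀, Finset.mem_filter.2 ⟨ha₀, ha₀q⟩⟩
    obtain ⟨b, hbs, hmax⟩ := Finset.exists_max_image _ (fun a => a.2.1 q) hne
    have hb := Finset.mem_filter.1 hbs
    have hwb : w b ≠ 0 := Finsupp.mem_support_iff.1 hb.1
    by_cases hT : (b.2.1 + Pi.single q 1 : ℕ → ℕ) ∈ jIdx ℓ j0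
    · have he := heval b
      rw [pstar_apply, pt_apply q w b hT] at he
      have hwb' : w (b.1, ⟨b.2.1 + Pi.single q 1, hT⟩) ≠ 0 := by
        intro h0
        rw [h0, mul_zero, add_zero, mul_eq_zero] at he
        tauto
      have hmem' : (b.1, (⟨b.2.1 + Pi.single q 1, hT⟩ : ↥(jIdx ℓ j0))) ∈
          w.support.filter fun a => a.1.1 q ≠ 0 :=
        Finset.mem_filter.2 ⟨Finsupp.mem_support_iff.2 hwb', hb.2⟩
      have := hmax _ hmem'
      simp only [Pi.add_apply, Pi.single_eq_same] at this
      omega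
    · have he := heval b
      rw [pstar_apply, pt_apply_not q w b hT, add_zero, mul_eq_zero] at he
      tauto
  -- Step B : pt q w = 0 pointwise
  have stepB : ∀ b, pt F ℓ Γ j0 q w b = 0 := by
    intro b
    have he := heval b
    rw [pstar_apply] at he
    by_cases hwb : w b = 0
    · rwa [hwb, mul_zero, zero_add] at he
    · rw [stepA b (Finsupp.mem_support_iff.2 hwb), zero_mul, zero_add] at he
      exact he
  -- Step C : second coordinates vanish
  intro a ha
  refine ⟨stepA a ha, ?_⟩
  by_contra haq
  have haq1 : 1 ≤ a.2.1 q := Nat.one_le_iff_ne_zero.2 haq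
  have hj : (a.2.1 - Pi.single q 1 : ℕ → ℕ) ∈ jIdx ℓ j0 := sub_single_mem_jIdx a.2.2 q
  set b : ↥Γ × ↥(jIdx ℓ j0) := (a.1, ⟨a.2.1 - Pi.single q 1, hj⟩) with hbdef
  have hTeq : (b.2.1 + Pi.single q 1 : ℕ → ℕ) = a.2.1 := by
    funext r
    rcases eq_or_ne r q with rfl | hr
    · simp only [hbdef, Pi.add_apply, Pi.sub_apply, Pi.single_eq_same]
      omega
    · simp [hbdef, Pi.single_eq_of_ne hr]
  have hT : (b.2.1 + Pi.single q 1 : ℕ → ℕ) ∈ jIdx ℓ j0 := hTeq ▸ a.2.2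
  have he := stepB b
  rw [pt_apply q w b hT] at he
  have hba : (b.1, (⟨b.2.1 + Pi.single q 1, hT⟩ : ↥(jIdx ℓ j0))) = a :=
    Prod.ext rfl (Subtype.ext hTeq)
  rw [hba, mul_eq_zero] at he
  rcases he with he | he
  · exact Nat.cast_ne_zero.2 (Nat.succ_ne_zero _) he
  · exact Finsupp.mem_support_iff.1 ha he

lemma eq_coeff_one [CharZero F] {w : CA F ℓ Γ j0}
    (hΓ3 : ∀ α ∈ Γ, ∀ p, 2 * iot ℓ 6 < p → α p = 0)
    (h : ∀ q, q ≤ 2 * iot ℓ 6 → dd F ℓ Γ j0 q w = 0) :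
    w = w (⟨0, Γ.zero_mem⟩, ⟨0, zero_mem_jIdx⟩) • X F ℓ Γ j0 0 0 := by
  set a0 : ↥Γ × ↥(jIdx ℓ j0) := (⟨0, Γ.zero_mem⟩, ⟨0, zero_mem_jIdx⟩) with ha0
  have hsub : w.support ⊆ {a0} := by
    intro a ha
    rw [Finset.mem_singleton]
    have hα : a.1.1 = 0 := by
      funext r
      by_cases hr : r ≤ 2 * iot ℓ 6
      · exact (dd_supp_zero (h r hr) a ha).1
      · exact hΓ3 a.1.1 a.1.2 r (by omega)
    have hi : a.2.1 = 0 := by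
      funext r
      by_cases hr : r ≤ 2 * iot ℓ 6
      · exact (dd_supp_zero (h r hr) a ha).2
      · exact a.2.2.2 r (by omega) (Or.inr (by omega))
    exact Prod.ext (Subtype.ext hα) (Subtype.ext hi)
  rw [X_pos Γ.zero_mem zero_mem_jIdx, Finsupp.smul_single, smul_eq_mul, mul_one]
  exact Finsupp.support_subset_singleton.1 hsub

end EvalLemmas
section BrkLemmas

variable {F : Type*} [Field F] {ℓ : ℕ → ℕ} {Γ : AddSubgroup (ℕ → F)} {j0 : Bool}

lemma single_sub_self (q : ℕ) : (Pi.single q 1 - Pi.single q 1 : ℕ → ℕ) = 0 := by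
  funext r
  simp

lemma dd_X_t {q : ℕ} (hq : (Pi.single q 1 : ℕ → ℕ) ∈ jIdx ℓ j0) (r : ℕ) :
    dd F ℓ Γ j0 r (X F ℓ Γ j0 0 (Pi.single q 1)) =
      ((Pi.single q 1 : ℕ → ℕ) r : F) •
        X F ℓ Γ j0 0 (Pi.single q 1 - Pi.single r 1) := by
  rw [dd_X Γ.zero_mem hq]
  simp

lemma brk_one (u : CA F ℓ Γ j0) :
    brk F ℓ Γ j0 u (X F ℓ Γ j0 0 0) = -((2 : F) • dd F ℓ Γ j0 0 u) := by
  rw [brk]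
  rw [Finset.sum_eq_zero fun p _ => ?_, dd_X0 Γ.zero_mem, Pi.zero_apply, zero_smul,
    mulA_zero, zero_add, Dop_one, sub_zero, mulA_smul, mulA_one, zero_sub]
  rw [dd_X0 Γ.zero_mem, dd_X0 Γ.zero_mem]
  simp only [Pi.zero_apply, zero_smul, mulA_zero, sub_zero, mulA_zero]

lemma brk_xmono (u : CA F ℓ Γ j0) {γ : ℕ → F} (hγ : γ ∈ Γ)
    (h0 : dd F ℓ Γ j0 0 u = 0) :
    brk F ℓ Γ j0 u (X F ℓ Γ j0 γ 0) =
      (∑ p ∈ iSet ℓ 1 6,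
        (γ (bar ℓ p) • mulA F ℓ Γ j0 (X F ℓ Γ j0 (sgm F ℓ p) 0)
            (mulA F ℓ Γ j0 (dd F ℓ Γ j0 p u) (X F ℓ Γ j0 γ 0)) -
         γ p • mulA F ℓ Γ j0 (X F ℓ Γ j0 (sgm F ℓ p) 0)
            (mulA F ℓ Γ j0 (dd F ℓ Γ j0 (bar ℓ p) u) (X F ℓ Γ j0 γ 0)))) +
      γ 0 • mulA F ℓ Γ j0 ((2 : F) • u - Dop F ℓ Γ j0 u) (X F ℓ Γ j0 γ 0) := by
  rw [brk, h0, zero_mulA, sub_zero]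
  congr 1
  · refine Finset.sum_congr rfl fun p _ => ?_
    rw [dd_X0 hγ, dd_X0 hγ, mulA_smul, mulA_smul, mulA_sub, mulA_smul, mulA_smul]
  · rw [dd_X0 hγ, mulA_smul]

lemma brk_tmono (u : CA F ℓ Γ j0) {q : ℕ} (hq : (Pi.single q 1 : ℕ → ℕ) ∈ jIdx ℓ j0)
    (h0 : dd F ℓ Γ j0 0 u = 0) :
    brk F ℓ Γ j0 u (X F ℓ Γ j0 0 (Pi.single q 1)) =
      (∑ p ∈ iSet ℓ 1 6,
        (((Pi.single q 1 : ℕ → ℕ) (bar ℓ p) : F) •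
            mulA F ℓ Γ j0 (X F ℓ Γ j0 (sgm F ℓ p) 0)
            (mulA F ℓ Γ j0 (dd F ℓ Γ j0 p u)
              (X F ℓ Γ j0 0 (Pi.single q 1 - Pi.single (bar ℓ p) 1))) -
         ((Pi.single q 1 : ℕ → ℕ) p : F) •
            mulA F ℓ Γ j0 (X F ℓ Γ j0 (sgm F ℓ p) 0)
            (mulA F ℓ Γ j0 (dd F ℓ Γ j0 (bar ℓ p) u)
              (X F ℓ Γ j0 0 (Pi.single q 1 - Pi.single p 1))))) +
      ((Pi.single q 1 : ℕ → ℕ) 0 : F) •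
        mulA F ℓ Γ j0 ((2 : F) • u - Dop F ℓ Γ j0 u)
          (X F ℓ Γ j0 0 (Pi.single q 1 - Pi.single 0 1)) := by
  rw [brk, h0, zero_mulA, sub_zero]
  congr 1
  · refine Finset.sum_congr rfl fun p _ => ?_
    rw [dd_X_t hq, dd_X_t hq, mulA_smul, mulA_smul, mulA_sub, mulA_smul, mulA_smul]
  · rw [dd_X_t hq, mulA_smul]

lemma brk_xr (u : CA F ℓ Γ j0) {r : ℕ} (hι : 0 < iot ℓ 6) (hr : r ∈ iSet ℓ 1 6)
    (hγ : (Pi.single r 1 : ℕ → F) ∈ Γ) (h0 : dd F ℓ Γ j0 0 u = 0) :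
    brk F ℓ Γ j0 u (X F ℓ Γ j0 (Pi.single r 1) 0) =
      -mulA F ℓ Γ j0 (X F ℓ Γ j0 (sgm F ℓ r) 0)
        (mulA F ℓ Γ j0 (dd F ℓ Γ j0 (bar ℓ r) u) (X F ℓ Γ j0 (Pi.single r 1) 0)) := by
  obtain ⟨hr1, hr6⟩ := mem_iSet16 hr
  rw [brk_xmono u hγ h0, Finset.sum_eq_single_of_mem r hr ?_]
  · rw [bar16 hr, Pi.single_eq_of_ne (by omega) 1, Pi.single_eq_same,
      Pi.single_eq_of_ne (by omega) 1, zero_smul, zero_smul, zero_sub, one_smul, add_zero]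
  · intro p hp hne
    obtain ⟨hp1, hp6⟩ := mem_iSet16 hp
    rw [bar16 hp, Pi.single_eq_of_ne (by omega) 1, Pi.single_eq_of_ne hne 1,
      zero_smul, zero_smul, sub_zero]

lemma brk_xbr (u : CA F ℓ Γ j0) {r : ℕ} (hr : r ∈ iSet ℓ 1 6)
    (hγ : (Pi.single (bar ℓ r) 1 : ℕ → F) ∈ Γ) (h0 : dd F ℓ Γ j0 0 u = 0) :
    brk F ℓ Γ j0 u (X F ℓ Γ j0 (Pi.single (bar ℓ r) 1) 0) =
      mulA F ℓ Γ j0 (X F ℓ Γ j0 (sgm F ℓ r) 0)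
        (mulA F ℓ Γ j0 (dd F ℓ Γ j0 r u)
          (X F ℓ Γ j0 (Pi.single (bar ℓ r) 1) 0)) := by
  obtain ⟨hr1, hr6⟩ := mem_iSet16 hr
  rw [brk_xmono u hγ h0, Finset.sum_eq_single_of_mem r hr ?_]
  · rw [bar16 hr, Pi.single_eq_same, Pi.single_eq_of_ne (by omega) 1,
      Pi.single_eq_of_ne (by omega) 1, zero_smul, zero_smul, one_smul, sub_zero, add_zero]
  · intro p hp hne
    obtain ⟨hp1, hp6⟩ := mem_iSet16 hp
    rw [bar16 hp, bar16 hr, Pi.single_eq_of_ne (by omega) 1,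
      Pi.single_eq_of_ne (by omega) 1, zero_smul, zero_smul, sub_zero]

lemma brk_t (u : CA F ℓ Γ j0) {q : ℕ} (hq : q ∈ iSet ℓ 1 6)
    (hmem : (Pi.single q 1 : ℕ → ℕ) ∈ jIdx ℓ j0) (h0 : dd F ℓ Γ j0 0 u = 0) :
    brk F ℓ Γ j0 u (X F ℓ Γ j0 0 (Pi.single q 1)) =
      -mulA F ℓ Γ j0 (X F ℓ Γ j0 (sgm F ℓ q) 0) (dd F ℓ Γ j0 (bar ℓ q) u) := by
  obtain ⟨hq1, hq6⟩ := mem_iSet16 hq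
  rw [brk_tmono u hmem h0, Finset.sum_eq_single_of_mem q hq ?_]
  · rw [bar16 hq, Pi.single_eq_of_ne (by omega) 1, Pi.single_eq_same, Pi.single_eq_of_ne
      (by omega) 1, single_sub_self, mulA_one]
    norm_num
  · intro p hp hne
    obtain ⟨hp1, hp6⟩ := mem_iSet16 hp
    rw [bar16 hp, Pi.single_eq_of_ne (by omega) 1, Pi.single_eq_of_ne hne 1]
    norm_num

lemma brk_tb (u : CA F ℓ Γ j0) {q : ℕ} (hq : q ∈ iSet ℓ 1 6)
    (hmem : (Pi.single (bar ℓ q) 1 : ℕ → ℕ) ∈ jIdx ℓ j0) (h0 : dd F ℓ Γ j0 0 u = 0) :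
    brk F ℓ Γ j0 u (X F ℓ Γ j0 0 (Pi.single (bar ℓ q) 1)) =
      mulA F ℓ Γ j0 (X F ℓ Γ j0 (sgm F ℓ q) 0) (dd F ℓ Γ j0 q u) := by
  obtain ⟨hq1, hq6⟩ := mem_iSet16 hq
  rw [brk_tmono u hmem h0, Finset.sum_eq_single_of_mem q hq ?_]
  · rw [bar16 hq, Pi.single_eq_same, Pi.single_eq_of_ne (by omega) 1, Pi.single_eq_of_ne
      (by omega) 1, single_sub_self, mulA_one]
    norm_num
  · intro p hp hne
    obtain ⟨hp1, hp6⟩ := mem_iSet16 hp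
    rw [bar16 hp, bar16 hq, Pi.single_eq_of_ne (by omega) 1, Pi.single_eq_of_ne (by omega) 1]
    norm_num

lemma brk_t0 (u : CA F ℓ Γ j0)
    (hmem : (Pi.single 0 1 : ℕ → ℕ) ∈ jIdx ℓ j0) (h0 : dd F ℓ Γ j0 0 u = 0) :
    brk F ℓ Γ j0 u (X F ℓ Γ j0 0 (Pi.single 0 1)) =
      (2 : F) • u - Dop F ℓ Γ j0 u := by
  rw [brk_tmono u hmem h0, Finset.sum_eq_zero fun p hp => ?_, zero_add,
    Pi.single_eq_same, single_sub_self, mulA_one]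
  · norm_num
  · obtain ⟨hp1, hp6⟩ := mem_iSet16 hp
    rw [bar16 hp, Pi.single_eq_of_ne (by omega) 1, Pi.single_eq_of_ne (by omega) 1]
    norm_num

lemma brk_x0 (u : CA F ℓ Γ j0) (hγ : (Pi.single 0 1 : ℕ → F) ∈ Γ)
    (h0 : dd F ℓ Γ j0 0 u = 0) :
    brk F ℓ Γ j0 u (X F ℓ Γ j0 (Pi.single 0 1) 0) =
      mulA F ℓ Γ j0 ((2 : F) • u - Dop F ℓ Γ j0 u) (X F ℓ Γ j0 (Pi.single 0 1) 0) := by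
  rw [brk_xmono u hγ h0, Finset.sum_eq_zero fun p hp => ?_, zero_add,
    Pi.single_eq_same, one_smul]
  · obtain ⟨hp1, hp6⟩ := mem_iSet16 hp
    rw [bar16 hp, Pi.single_eq_of_ne (by omega) 1, Pi.single_eq_of_ne (by omega) 1,
      zero_smul, zero_smul, sub_zero]

end BrkLemmas
section ExtractLemmas

variable {F : Type*} [Field F] {ℓ : ℕ → ℕ} {Γ : AddSubgroup (ℕ → F)} {j0 : Bool}

lemma extract1 {β : ℕ → F} (hβ : β ∈ Γ) {w z : CA F ℓ Γ j0}
    (h : mulA F ℓ Γ j0 (X F ℓ Γ j0 β 0) w = z) :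
    w = mulA F ℓ Γ j0 (X F ℓ Γ j0 (-β) 0) z := by
  rw [← h, shift_cancel hβ]

lemma extract2 {β γ : ℕ → F} (hβ : β ∈ Γ) (hγ : γ ∈ Γ) {w z : CA F ℓ Γ j0}
    (h : mulA F ℓ Γ j0 (X F ℓ Γ j0 β 0) (mulA F ℓ Γ j0 w (X F ℓ Γ j0 γ 0)) = z) :
    w = mulA F ℓ Γ j0 (X F ℓ Γ j0 (-γ) 0) (mulA F ℓ Γ j0 (X F ℓ Γ j0 (-β) 0) z) := by
  rw [mulA_comm w] at h
  exact extract1 hγ (extract1 hβ h)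

lemma shift_smul_X {β δ : ℕ → F} (hβ : β ∈ Γ) (hδ : δ ∈ Γ) (r : F) :
    mulA F ℓ Γ j0 (X F ℓ Γ j0 β 0) (r • X F ℓ Γ j0 δ 0) = r • X F ℓ Γ j0 (β + δ) 0 := by
  rw [mulA_smul, mulA_X_X hβ zero_mem_jIdx hδ zero_mem_jIdx, add_zero]

lemma X_ne_zero {α : ℕ → F} {i : ℕ → ℕ} (h1 : α ∈ Γ) (h2 : i ∈ jIdx ℓ j0) :
    X F ℓ Γ j0 α i ≠ 0 := by
  rw [X_pos h1 h2]
  exact fun h => one_ne_zero (Finsupp.single_eq_zero.1 h)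

lemma dd_finset_sum {s : Finset ℕ} {f : ℕ → CA F ℓ Γ j0} (q : ℕ) :
    dd F ℓ Γ j0 q (∑ p ∈ s, f p) = ∑ p ∈ s, dd F ℓ Γ j0 q (f p) := by
  classical
  induction s using Finset.induction_on with
  | empty => simp [dd_zero]
  | insert _ _ hx ih =>
    rw [Finset.sum_insert hx, Finset.sum_insert hx, dd_add, ih]

lemma Dop_finset_sum {s : Finset ℕ} {f : ℕ → CA F ℓ Γ j0} :
    Dop F ℓ Γ j0 (∑ p ∈ s, f p) = ∑ p ∈ s, Dop F ℓ Γ j0 (f p) := by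
  classical
  induction s using Finset.induction_on with
  | empty => simp [Dop_zero]
  | insert _ _ hx ih =>
    rw [Finset.sum_insert hx, Finset.sum_insert hx, Dop_add, ih]

lemma mem_barSet_iff {i j q : ℕ} :
    q ∈ barSet ℓ (iSet ℓ i j) ↔
      ∃ p, (iot ℓ (i - 1) + 1 ≤ p ∧ p ≤ iot ℓ j) ∧ q = bar ℓ p := by
  rw [barSet, Finset.mem_image]
  constructor
  · rintro ⟨p, hp, rfl⟩
    exact ⟨p, Finset.mem_Icc.1 hp, rfl⟩
  · rintro ⟨p, hp, rfl⟩
    exact ⟨p, Finset.mem_Icc.2 hp, rfl⟩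

/-- Membership decision in the index set `S = Ī₂ ∪ J₃ ∪ I₅` of the statement. -/
lemma not_mem_S {q : ℕ}
    (h : q ≤ iot ℓ 2 ∨ (iot ℓ 3 < q ∧ q ≤ iot ℓ 4) ∨ (iot ℓ 5 < q ∧ q ≤ iot ℓ 6) ∨
      (iot ℓ 6 < q ∧ q ≤ iot ℓ 6 + iot ℓ 1) ∨ iot ℓ 6 + iot ℓ 3 < q) :
    q ∉ barSet ℓ (iSet ℓ 2 2) ∪ jSet ℓ 3 3 ∪ iSet ℓ 5 5 := by
  have m12 : iot ℓ 1 ≤ iot ℓ 2 := iot_mono (by norm_num)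
  have m23 : iot ℓ 2 ≤ iot ℓ 3 := iot_mono (by norm_num)
  have m34 : iot ℓ 3 ≤ iot ℓ 4 := iot_mono (by norm_num)
  have m45 : iot ℓ 4 ≤ iot ℓ 5 := iot_mono (by norm_num)
  have m56 : iot ℓ 5 ≤ iot ℓ 6 := iot_mono (by norm_num)
  intro hq
  rcases Finset.mem_union.1 hq with hq | hq
  · rcases Finset.mem_union.1 hq with hq | hq
    · obtain ⟨p, hp, hqe⟩ := mem_barSet_iff.1 hq
      norm_num at hp
      rw [bar_of_le (by omega)] at hqe
      omega
    · rcases Finset.mem_union.1 hq with hq | hq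
      · rw [iSet, Finset.mem_Icc] at hq
        norm_num at hq
        omega
      · obtain ⟨p, hp, hqe⟩ := mem_barSet_iff.1 hq
        norm_num at hp
        rw [bar_of_le (by omega)] at hqe
        omega
  · rw [iSet, Finset.mem_Icc] at hq
    norm_num at hq
    omega

lemma iSet46_split {p : ℕ} (h : p ∈ iSet ℓ 4 6) :
    p ∈ iSet ℓ 4 5 ∨ p ∈ iSet ℓ 6 6 := by
  have m45 : iot ℓ 4 ≤ iot ℓ 5 := iot_mono (by norm_num)
  rw [iSet, Finset.mem_Icc] at h ⊢
  rw [iSet, Finset.mem_Icc]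
  norm_num at h ⊢
  omega

lemma iSet66_sub : (iSet ℓ 6 6 : Finset ℕ) ⊆ iSet ℓ 1 6 := by
  intro p hp
  rw [iSet, Finset.mem_Icc] at hp ⊢
  norm_num [iot_zero] at hp ⊢
  omega

lemma iSet15_sub45 : (iSet ℓ 4 5 : Finset ℕ) ⊆ iSet ℓ 1 5 := by
  intro p hp
  rw [iSet, Finset.mem_Icc] at hp ⊢
  norm_num [iot_zero] at hp ⊢
  have m34 : iot ℓ 3 ≤ iot ℓ 4 := iot_mono (by norm_num)
  omega

lemma iSet15_sub13 : (iSet ℓ 1 3 : Finset ℕ) ⊆ iSet ℓ 1 5 :=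
  Finset.Icc_subset_Icc le_rfl (iot_mono (by norm_num))

end ExtractLemmas
section FinalPrep

variable {F : Type*} [Field F] {ℓ : ℕ → ℕ} {Γ : AddSubgroup (ℕ → F)} {j0 : Bool}

/-- coefficient `μ(1_p)` (or 0). -/
noncomputable def cfD (Γ : AddSubgroup (ℕ → F)) (μ : ↥Γ →+ F) (p : ℕ) : F :=
  @dite _ ((Pi.single p 1 : ℕ → F) ∈ Γ) (Classical.dec _) (fun h => μ ⟨_, h⟩) (fun _ => 0)

lemma cfD_pos {μ : ↥Γ →+ F} {p : ℕ} (h : (Pi.single p 1 : ℕ → F) ∈ Γ) :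
    cfD Γ μ p = μ ⟨Pi.single p 1, h⟩ := by
  rw [cfD, dif_pos h]

/-- the exponent `1_p + 1_{p̄}` (as an `F`-valued function). -/
def GGD (F : Type*) [Field F] (ℓ : ℕ → ℕ) (p : ℕ) : ℕ → F :=
  Pi.single p 1 + Pi.single (bar ℓ p) 1

lemma brk_zero (v : CA F ℓ Γ j0) : brk F ℓ Γ j0 0 v = 0 := by
  rw [brk]
  simp [dd_zero, zero_mulA, mulA_zero, Dop_zero]

lemma dmu_zero (v : CA F ℓ Γ j0) : dmu F ℓ Γ j0 (⇑(0 : ↥Γ →+ F)) v = 0 := by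
  rw [dmu]
  simp [Finsupp.sum]

end FinalPrep

/-- The sum on the right-hand side of Theorem 3.1 is direct: if
`Σ_{p∈Ī₂∪J₃∪I₅} c_p ∂_{t_p} + d_μ + ad u = 0` as an operator on `𝒦`, with
`μ ∈ Hom*_ℤ(Γ,F)`, then all `c_p = 0`, `μ = 0` and `u = 0`. -/
theorem derivation_sum_is_direct
    {F : Type*} [Field F] [CharZero F] (ℓ : ℕ → ℕ) (Γ : AddSubgroup (ℕ → F)) (j0 : Bool)
    (hℓ : 0 < iot ℓ 6)
    (hΓ1 : ∀ p ∈ jSet ℓ 1 3 ∪ iSet ℓ 4 5, (Pi.single p (1 : F) : ℕ → F) ∈ Γ)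
    (hΓ2 : ∀ α ∈ Γ, ∀ p ∈ iSet ℓ 6 6 ∪ barSet ℓ (iSet ℓ 4 6), α p = 0)
    (hΓ3 : ∀ α ∈ Γ, ∀ p, 2 * iot ℓ 6 < p → α p = 0)
    (hΓ0 : (∃ α ∈ Γ, α 0 ≠ 0) → (Pi.single 0 (1 : F) : ℕ → F) ∈ Γ)
    (hJ0 : j0 = false → ∃ α ∈ Γ, α 0 ≠ 0)
    -- `Hom*_ℤ(Γ,F)`: a fixed complement of `span{μ_p : p ∈ {0}∪I_{1,3}}` in `Hom'_ℤ(Γ,F)`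
    (H : Submodule F (↥Γ →+ F)) (hH0 : H ≤ homPrime F ℓ Γ)
    (hH1 : H ⊔ spanMu F ℓ Γ j0 = homPrime F ℓ Γ)
    (hH2 : H ⊓ spanMu F ℓ Γ j0 = ⊥)
    (c : ℕ → F) (μ : ↥Γ →+ F) (hμ : μ ∈ H) (u : CA F ℓ Γ j0)
    (hzero : ∀ v : CA F ℓ Γ j0,
      (∑ p ∈ barSet ℓ (iSet ℓ 2 2) ∪ jSet ℓ 3 3 ∪ iSet ℓ 5 5, c p • pt F ℓ Γ j0 p v) +
        dmu F ℓ Γ j0 (⇑μ) v + brk F ℓ Γ j0 u v = 0) :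
    (∀ p ∈ barSet ℓ (iSet ℓ 2 2) ∪ jSet ℓ 3 3 ∪ iSet ℓ 5 5, c p = 0) ∧ μ = 0 ∧ u = 0 := by
  classical
  have m12 : iot ℓ 1 ≤ iot ℓ 2 := iot_mono (by norm_num)
  have m23 : iot ℓ 2 ≤ iot ℓ 3 := iot_mono (by norm_num)
  have m34 : iot ℓ 3 ≤ iot ℓ 4 := iot_mono (by norm_num)
  have m45 : iot ℓ 4 ≤ iot ℓ 5 := iot_mono (by norm_num)
  have m56 : iot ℓ 5 ≤ iot ℓ 6 := iot_mono (by norm_num)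
  have hz0 : (⇑μ) (⟨0, Γ.zero_mem⟩ : ↥Γ) = 0 := map_zero μ
  -- Step 1 : ∂₀ u = 0
  have hstep0 : dd F ℓ Γ j0 0 u = 0 := by
    have h := hzero (X F ℓ Γ j0 0 0)
    have hsum : (∑ p ∈ barSet ℓ (iSet ℓ 2 2) ∪ jSet ℓ 3 3 ∪ iSet ℓ 5 5,
        c p • pt F ℓ Γ j0 p (X F ℓ Γ j0 0 0)) = 0 :=
      Finset.sum_eq_zero fun p _ => by
        rw [pt_X Γ.zero_mem zero_mem_jIdx]; simp
    rw [hsum, brk_one, dmu_X (⇑μ) Γ.zero_mem zero_mem_jIdx, hz0, zero_smul, zero_add,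
      zero_add, neg_eq_zero] at h
    exact (smul_eq_zero.1 h).resolve_left two_ne_zero
  -- generic tests
  have xtest : ∀ (γ : ℕ → F) (hγ : γ ∈ Γ),
      brk F ℓ Γ j0 u (X F ℓ Γ j0 γ 0) = -(⇑μ ⟨γ, hγ⟩ • X F ℓ Γ j0 γ 0) := by
    intro γ hγ
    have h := hzero (X F ℓ Γ j0 γ 0)
    have hsum : (∑ p ∈ barSet ℓ (iSet ℓ 2 2) ∪ jSet ℓ 3 3 ∪ iSet ℓ 5 5,
        c p • pt F ℓ Γ j0 p (X F ℓ Γ j0 γ 0)) = 0 :=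
      Finset.sum_eq_zero fun p _ => by
        rw [pt_X hγ zero_mem_jIdx]; simp
    rw [hsum, dmu_X (⇑μ) hγ zero_mem_jIdx, zero_add] at h
    exact eq_neg_of_add_eq_zero_right h
  have ttest : ∀ (q : ℕ), (Pi.single q 1 : ℕ → ℕ) ∈ jIdx ℓ j0 →
      q ∉ barSet ℓ (iSet ℓ 2 2) ∪ jSet ℓ 3 3 ∪ iSet ℓ 5 5 →
      brk F ℓ Γ j0 u (X F ℓ Γ j0 0 (Pi.single q 1)) = 0 := by
    intro q hq hqS
    have h := hzero (X F ℓ Γ j0 0 (Pi.single q 1))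
    have hsum : (∑ p ∈ barSet ℓ (iSet ℓ 2 2) ∪ jSet ℓ 3 3 ∪ iSet ℓ 5 5,
        c p • pt F ℓ Γ j0 p (X F ℓ Γ j0 0 (Pi.single q 1))) = 0 :=
      Finset.sum_eq_zero fun p hp => by
        rw [pt_X Γ.zero_mem hq, Pi.single_eq_of_ne (fun hpq => hqS (by rw [← hpq]; exact hp)) 1]
        simp
    rw [hsum, dmu_X (⇑μ) Γ.zero_mem hq, hz0, zero_smul, zero_add, zero_add] at h
    exact h
  -- basic membership facts for I₁₃
  have hγ13 : ∀ p ∈ iSet ℓ 1 3, (Pi.single p 1 : ℕ → F) ∈ Γ := fun p hp =>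
    hΓ1 _ (Finset.mem_union_left _ (Finset.mem_union_left _ hp))
  have hγb13 : ∀ p ∈ iSet ℓ 1 3, (Pi.single (bar ℓ p) 1 : ℕ → F) ∈ Γ := fun p hp =>
    hΓ1 _ (Finset.mem_union_left _ (Finset.mem_union_right _ (Finset.mem_image.2 ⟨p, hp, rfl⟩)))
  have hGmem : ∀ p ∈ iSet ℓ 1 3, GGD F ℓ p ∈ Γ := fun p hp =>
    Γ.add_mem (hγ13 p hp) (hγb13 p hp)
  have hsgm13 : ∀ p ∈ iSet ℓ 1 3, sgm F ℓ p = -GGD F ℓ p := by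
    intro p hp
    rw [sgm_13 hp, GGD, bar16 (iSet13_sub hp)]
    abel
  have hσΓ13 : ∀ p ∈ iSet ℓ 1 3, sgm F ℓ p ∈ Γ := by
    intro p hp
    rw [hsgm13 p hp]
    exact Γ.neg_mem (hGmem p hp)
  -- μ(1_{p̄}) = -μ(1_p) for p ∈ I₁₃
  have hmu13 : ∀ p (hp : p ∈ iSet ℓ 1 3),
      ⇑μ ⟨Pi.single (bar ℓ p) 1, hγb13 p hp⟩ = -cfD Γ μ p := by
    intro p hp
    have h0 := hH0 hμ p (iSet15_sub13 hp) (hσΓ13 p hp)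
    have he : (⟨sgm F ℓ p, hσΓ13 p hp⟩ : ↥Γ) =
        -(⟨Pi.single p 1, hγ13 p hp⟩ + ⟨Pi.single (bar ℓ p) 1, hγb13 p hp⟩) :=
      Subtype.ext (by
        show sgm F ℓ p = -(Pi.single p 1 + Pi.single (bar ℓ p) 1)
        rw [hsgm13 p hp, GGD])
    rw [he, map_neg, map_add, neg_eq_zero] at h0
    rw [cfD_pos (hγ13 p hp)]
    linear_combination h0
  -- the derivative facts
  have hfact13 : ∀ p ∈ iSet ℓ 1 3,
      dd F ℓ Γ j0 p u = cfD Γ μ p • X F ℓ Γ j0 (GGD F ℓ p) 0 ∧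
      dd F ℓ Γ j0 (bar ℓ p) u = cfD Γ μ p • X F ℓ Γ j0 (GGD F ℓ p) 0 := by
    intro p hp
    have hp16 := iSet13_sub hp
    constructor
    · have h := xtest _ (hγb13 p hp)
      rw [brk_xbr u hp16 (hγb13 p hp) hstep0] at h
      have h2 := extract2 (hσΓ13 p hp) (hγb13 p hp) h
      rw [← neg_smul, shift_smul_X (Γ.neg_mem (hσΓ13 p hp)) (hγb13 p hp),
        shift_smul_X (Γ.neg_mem (hγb13 p hp))
          (Γ.add_mem (Γ.neg_mem (hσΓ13 p hp)) (hγb13 p hp))] at h2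
      have hexp : (-(Pi.single (bar ℓ p) 1) + (-(sgm F ℓ p) + Pi.single (bar ℓ p) 1) : ℕ → F)
          = GGD F ℓ p := by
        rw [hsgm13 p hp, neg_neg]; abel
      rw [hexp, hmu13 p hp, neg_neg] at h2
      exact h2
    · have h := xtest _ (hγ13 p hp)
      rw [brk_xr u hℓ hp16 (hγ13 p hp) hstep0, neg_inj] at h
      have h2 := extract2 (hσΓ13 p hp) (hγ13 p hp) h
      rw [shift_smul_X (Γ.neg_mem (hσΓ13 p hp)) (hγ13 p hp),
        shift_smul_X (Γ.neg_mem (hγ13 p hp))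
          (Γ.add_mem (Γ.neg_mem (hσΓ13 p hp)) (hγ13 p hp))] at h2
      have hexp : (-(Pi.single p 1) + (-(sgm F ℓ p) + Pi.single p 1) : ℕ → F)
          = GGD F ℓ p := by
        rw [hsgm13 p hp, neg_neg]; abel
      rw [hexp, ← cfD_pos (hγ13 p hp)] at h2
      exact h2
  have hfact46 : ∀ p ∈ iSet ℓ 4 6,
      dd F ℓ Γ j0 p u = 0 ∧ dd F ℓ Γ j0 (bar ℓ p) u = 0 := by
    intro p hp
    have hp16 := iSet46_sub hp
    obtain ⟨hp1, hp6⟩ := mem_iSet16 hp16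
    have hpI : iot ℓ 3 < p ∧ p ≤ iot ℓ 6 := by
      rw [iSet, Finset.mem_Icc] at hp
      norm_num at hp
      omega
    have hσΓ : sgm F ℓ p ∈ Γ := by
      rcases iSet46_split hp with h45 | h66
      · rw [sgm_45 h45]
        exact Γ.neg_mem (hΓ1 _ (Finset.mem_union_right _ h45))
      · rw [sgm_66 h66]
        exact Γ.zero_mem
    constructor
    · have hmem : (Pi.single (bar ℓ p) 1 : ℕ → ℕ) ∈ jIdx ℓ j0 := by
        rw [bar16 hp16]
        exact single_mem_jIdx (Or.inr (Or.inr ⟨by omega, by omega⟩))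
      have hnot : bar ℓ p ∉ barSet ℓ (iSet ℓ 2 2) ∪ jSet ℓ 3 3 ∪ iSet ℓ 5 5 := by
        rw [bar16 hp16]
        exact not_mem_S (by omega)
      have h := ttest _ hmem hnot
      rw [brk_tb u hp16 hmem hstep0] at h
      have h2 := extract1 hσΓ h
      rwa [mulA_zero] at h2
    · rcases iSet46_split hp with h45 | h66
      · have hγp : (Pi.single p 1 : ℕ → F) ∈ Γ := hΓ1 _ (Finset.mem_union_right _ h45)
        have hmu0 : ⇑μ ⟨Pi.single p 1, hγp⟩ = 0 := by
          have h0 := hH0 hμ p (iSet15_sub45 h45) hσΓ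
          have he : (⟨Pi.single p 1, hγp⟩ : ↥Γ) = -⟨sgm F ℓ p, hσΓ⟩ :=
            Subtype.ext (by
              show Pi.single p 1 = -(sgm F ℓ p)
              rw [sgm_45 h45, neg_neg])
          rw [he, map_neg, h0, neg_zero]
        have h := xtest _ hγp
        rw [brk_xr u hℓ hp16 hγp hstep0, neg_inj, hmu0, zero_smul] at h
        have h2 := extract2 hσΓ hγp h
        rwa [mulA_zero, mulA_zero] at h2
      · obtain ⟨h5, h6⟩ : iot ℓ 5 < p ∧ p ≤ iot ℓ 6 := by
          rw [iSet, Finset.mem_Icc] at h66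
          norm_num at h66
          omega
        have hmem : (Pi.single p 1 : ℕ → ℕ) ∈ jIdx ℓ j0 :=
          single_mem_jIdx (Or.inr (Or.inl ⟨by omega, by omega⟩))
        have hnot : p ∉ barSet ℓ (iSet ℓ 2 2) ∪ jSet ℓ 3 3 ∪ iSet ℓ 5 5 :=
          not_mem_S (Or.inr (Or.inr (Or.inl ⟨by omega, by omega⟩)))
        have h := ttest _ hmem hnot
        rw [brk_t u hp16 hmem hstep0, neg_eq_zero, sgm_66 h66, one_mulA] at h
        exact h
  -- the scalar λ
  obtain ⟨lam, hlam1, hlam2, hlam3⟩ : ∃ lam : F,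
      ((2 : F) • u - Dop F ℓ Γ j0 u = lam • X F ℓ Γ j0 0 0) ∧
      (∀ g : ↥Γ, lam * g.1 0 = lam * muZero F Γ j0 g) ∧ (μ = 0 → lam = 0) := by
    by_cases hj : j0 = true
    · refine ⟨0, ?_, fun g => by rw [zero_mul, zero_mul], fun _ => rfl⟩
      have hmem : (Pi.single 0 1 : ℕ → ℕ) ∈ jIdx ℓ j0 :=
        ⟨fun hff => absurd (hj.symm.trans hff) (by simp),
          fun p hp _ => Pi.single_eq_of_ne (by omega) 1⟩
      have hnot : (0 : ℕ) ∉ barSet ℓ (iSet ℓ 2 2) ∪ jSet ℓ 3 3 ∪ iSet ℓ 5 5 :=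
        not_mem_S (Or.inl (Nat.zero_le _))
      have h := ttest 0 hmem hnot
      rw [brk_t0 u hmem hstep0] at h
      rw [h, zero_smul]
    · have hjf : j0 = false := by
        revert hj
        cases j0 <;> simp
      have hγ0 : (Pi.single 0 1 : ℕ → F) ∈ Γ := hΓ0 (hJ0 hjf)
      have hmz : muZero F Γ j0 = coordHom F Γ 0 := by
        rw [muZero, hjf]
        simp
      have h := xtest _ hγ0
      rw [brk_x0 u hγ0 hstep0] at h
      refine ⟨-(⇑μ ⟨Pi.single 0 1, hγ0⟩), ?_, ?_, ?_⟩
      · rw [mulA_comm] at h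
        have h2 := extract1 hγ0 h
        rw [← neg_smul, shift_smul_X (Γ.neg_mem hγ0) hγ0, neg_add_cancel] at h2
        exact h2
      · intro g
        rw [hmz]
        rfl
      · intro h0
        rw [h0]
        simp
  -- u equals the candidate
  have hu : u = (lam / 2) • X F ℓ Γ j0 0 0 +
      ∑ p ∈ iSet ℓ 1 3, cfD Γ μ p • X F ℓ Γ j0 (GGD F ℓ p) 0 := by
    set cand := (lam / 2) • X F ℓ Γ j0 0 0 +
      ∑ p ∈ iSet ℓ 1 3, cfD Γ μ p • X F ℓ Γ j0 (GGD F ℓ p) 0 with hcand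
    have hGval : ∀ p ∈ iSet ℓ 1 3, ∀ r : ℕ, GGD F ℓ p r =
        (if r = p then 1 else 0) + (if r = p + iot ℓ 6 then 1 else 0) := by
      intro p hp r
      rw [GGD, bar16 (iSet13_sub hp), Pi.add_apply, Pi.single_apply, Pi.single_apply]
    have hdd : ∀ q, q ≤ 2 * iot ℓ 6 → dd F ℓ Γ j0 q (u - cand) = 0 := by
      intro q hq2
      have hterm : ∀ p ∈ iSet ℓ 1 3,
          dd F ℓ Γ j0 q (cfD Γ μ p • X F ℓ Γ j0 (GGD F ℓ p) 0) =
            (cfD Γ μ p * GGD F ℓ p q) • X F ℓ Γ j0 (GGD F ℓ p) 0 := by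
        intro p hp
        rw [dd_smul, dd_X0 (hGmem p hp), smul_smul]
      rw [hcand, dd_sub, dd_add, dd_smul, dd_X0 Γ.zero_mem, dd_finset_sum,
        Finset.sum_congr rfl hterm]
      simp only [Pi.zero_apply, zero_smul, smul_zero, zero_add]
      rcases Nat.eq_zero_or_pos q with rfl | hq1
      · have hside : ∀ p ∈ iSet ℓ 1 3,
            (cfD Γ μ p * GGD F ℓ p 0) • X F ℓ Γ j0 (GGD F ℓ p) 0 = 0 := by
          intro p hp
          have hpp := mem_iSet16 (iSet13_sub hp)
          rw [hGval p hp 0, if_neg (by omega), if_neg (by omega)]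
          norm_num
        rw [hstep0, Finset.sum_eq_zero hside, sub_zero]
      · by_cases hq6 : q ≤ iot ℓ 6
        · have hq16 : q ∈ iSet ℓ 1 6 := by
            rw [iSet, Finset.mem_Icc, iot_zero]
            norm_num
            omega
          rcases iSet16_split hq16 with h13 | h46
          · have hq3 : q ≤ iot ℓ 3 := by
              rw [iSet, Finset.mem_Icc] at h13
              norm_num [iot_zero] at h13
              omega
            have hside : ∀ p ∈ iSet ℓ 1 3, p ≠ q →
                (cfD Γ μ p * GGD F ℓ p q) • X F ℓ Γ j0 (GGD F ℓ p) 0 = 0 := by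
              intro p hp hpq
              have hpp := mem_iSet16 (iSet13_sub hp)
              rw [hGval p hp q, if_neg (by omega), if_neg (by omega)]
              norm_num
            rw [(hfact13 q h13).1, Finset.sum_eq_single_of_mem q h13 hside, hGval q h13 q,
              if_pos rfl, if_neg (by omega), add_zero, mul_one, sub_self]
          · have hq4 : iot ℓ 3 < q := by
              rw [iSet, Finset.mem_Icc] at h46
              norm_num at h46
              omega
            have hside : ∀ p ∈ iSet ℓ 1 3,
                (cfD Γ μ p * GGD F ℓ p q) • X F ℓ Γ j0 (GGD F ℓ p) 0 = 0 := by
              intro p hp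
              have hpp := mem_iSet16 (iSet13_sub hp)
              have hp3 : p ≤ iot ℓ 3 := by
                rw [iSet, Finset.mem_Icc] at hp
                norm_num [iot_zero] at hp
                omega
              rw [hGval p hp q, if_neg (by omega), if_neg (by omega)]
              norm_num
            rw [(hfact46 q h46).1, Finset.sum_eq_zero hside, sub_zero]
        · have hp016 : q - iot ℓ 6 ∈ iSet ℓ 1 6 := by
            rw [iSet, Finset.mem_Icc, iot_zero]
            norm_num
            omega
          have hbar : bar ℓ (q - iot ℓ 6) = q := by
            rw [bar_of_le (by omega)]
            omega
          rcases iSet16_split hp016 with h13 | h46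
          · have hd := (hfact13 _ h13).2
            rw [hbar] at hd
            have hq0 : q - iot ℓ 6 ≤ iot ℓ 3 := by
              rw [iSet, Finset.mem_Icc] at h13
              norm_num [iot_zero] at h13
              omega
            have hside : ∀ p ∈ iSet ℓ 1 3, p ≠ q - iot ℓ 6 →
                (cfD Γ μ p * GGD F ℓ p q) • X F ℓ Γ j0 (GGD F ℓ p) 0 = 0 := by
              intro p hp hpq
              have hpp := mem_iSet16 (iSet13_sub hp)
              rw [hGval p hp q, if_neg (by omega), if_neg (by omega)]
              norm_num
            rw [hd, Finset.sum_eq_single_of_mem _ h13 hside, hGval _ h13 q,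
              if_neg (by omega), if_pos (by omega), zero_add, mul_one, sub_self]
          · have hd := (hfact46 _ h46).2
            rw [hbar] at hd
            have hq4 : iot ℓ 3 < q - iot ℓ 6 := by
              rw [iSet, Finset.mem_Icc] at h46
              norm_num at h46
              omega
            have hside : ∀ p ∈ iSet ℓ 1 3,
                (cfD Γ μ p * GGD F ℓ p q) • X F ℓ Γ j0 (GGD F ℓ p) 0 = 0 := by
              intro p hp
              have hpp := mem_iSet16 (iSet13_sub hp)
              have hp3 : p ≤ iot ℓ 3 := by
                rw [iSet, Finset.mem_Icc] at hp
                norm_num [iot_zero] at hp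
                omega
              rw [hGval p hp q, if_neg (by omega), if_neg (by omega)]
              norm_num
            rw [hd, Finset.sum_eq_zero hside, sub_zero]
    have hwr := eq_coeff_one hΓ3 hdd
    have hDg : ∀ p ∈ iSet ℓ 1 3, Dop F ℓ Γ j0 (X F ℓ Γ j0 (GGD F ℓ p) 0) =
        (2 : F) • X F ℓ Γ j0 (GGD F ℓ p) 0 := by
      intro p hp
      have hgm : (Pi.single p 1 + Pi.single (p + iot ℓ 6) 1 : ℕ → F) ∈ Γ := by
        have := hGmem p hp
        rwa [GGD, bar16 (iSet13_sub hp)] at this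
      have h2 := Dop_g (j0 := j0) hp hgm
      rw [GGD, bar16 (iSet13_sub hp)]
      exact h2
    have hcand2 : (2 : F) • cand - Dop F ℓ Γ j0 cand = lam • X F ℓ Γ j0 0 0 := by
      have hsum1 : (∑ p ∈ iSet ℓ 1 3, Dop F ℓ Γ j0 (cfD Γ μ p • X F ℓ Γ j0 (GGD F ℓ p) 0)) =
          ∑ p ∈ iSet ℓ 1 3, (2 : F) • (cfD Γ μ p • X F ℓ Γ j0 (GGD F ℓ p) 0) :=
        Finset.sum_congr rfl fun p hp => by rw [Dop_smul, hDg p hp, smul_comm]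
      rw [hcand, Dop_add, Dop_smul, Dop_one, smul_zero, Dop_finset_sum, hsum1,
        ← Finset.smul_sum, smul_add, smul_smul]
      have h2 : (2 : F) * (lam / 2) = lam := by
        rw [mul_comm, div_mul_cancel₀ _ (two_ne_zero (α := F))]
      rw [h2, zero_add]
      abel
    have h2w : (2 : F) • (u - cand) - Dop F ℓ Γ j0 (u - cand) = 0 := by
      calc (2 : F) • (u - cand) - Dop F ℓ Γ j0 (u - cand)
          = ((2 : F) • u - Dop F ℓ Γ j0 u) - ((2 : F) • cand - Dop F ℓ Γ j0 cand) := by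
            rw [smul_sub, Dop_sub]; abel
        _ = 0 := by rw [hlam1, hcand2, sub_self]
    rw [hwr, Dop_smul, Dop_one, smul_zero, sub_zero, smul_smul] at h2w
    have hr0 := (smul_eq_zero.1 h2w).resolve_right (X_ne_zero Γ.zero_mem zero_mem_jIdx)
    have hr1 : (u - cand) (⟨0, Γ.zero_mem⟩, ⟨0, zero_mem_jIdx⟩) = 0 :=
      (mul_eq_zero.1 hr0).resolve_left two_ne_zero
    rw [hr1, zero_smul] at hwr
    exact sub_eq_zero.1 hwr
  -- μ = 0
  have hmuzero : μ = 0 := by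
    have hkey : ∀ g : ↥Γ, ⇑μ g +
        ((∑ p ∈ iSet ℓ 1 3, cfD Γ μ p * (g.1 (bar ℓ p) - g.1 p)) + lam * g.1 0) = 0 := by
      intro g
      have h := xtest g.1 g.2
      rw [brk_xmono u g.2 hstep0] at h
      have hterm : ∀ p ∈ iSet ℓ 1 3,
          (g.1 (bar ℓ p) • mulA F ℓ Γ j0 (X F ℓ Γ j0 (sgm F ℓ p) 0)
              (mulA F ℓ Γ j0 (dd F ℓ Γ j0 p u) (X F ℓ Γ j0 g.1 0)) -
           g.1 p • mulA F ℓ Γ j0 (X F ℓ Γ j0 (sgm F ℓ p) 0)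
              (mulA F ℓ Γ j0 (dd F ℓ Γ j0 (bar ℓ p) u) (X F ℓ Γ j0 g.1 0)))
          = (cfD Γ μ p * (g.1 (bar ℓ p) - g.1 p)) • X F ℓ Γ j0 g.1 0 := by
        intro p hp
        have hexp : sgm F ℓ p + (GGD F ℓ p + g.1) = g.1 := by
          rw [hsgm13 p hp]
          abel
        rw [(hfact13 p hp).1, (hfact13 p hp).2, smul_mulA,
          mulA_X_X (hGmem p hp) zero_mem_jIdx g.2 zero_mem_jIdx, add_zero, mulA_smul,
          mulA_X_X (hσΓ13 p hp) zero_mem_jIdx (Γ.add_mem (hGmem p hp) g.2) zero_mem_jIdx,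
          add_zero, hexp, smul_smul, smul_smul, ← sub_smul]
        congr 1
        ring
      have hzero46 : ∀ p ∈ iSet ℓ 1 6, p ∉ iSet ℓ 1 3 →
          (g.1 (bar ℓ p) • mulA F ℓ Γ j0 (X F ℓ Γ j0 (sgm F ℓ p) 0)
              (mulA F ℓ Γ j0 (dd F ℓ Γ j0 p u) (X F ℓ Γ j0 g.1 0)) -
           g.1 p • mulA F ℓ Γ j0 (X F ℓ Γ j0 (sgm F ℓ p) 0)
              (mulA F ℓ Γ j0 (dd F ℓ Γ j0 (bar ℓ p) u) (X F ℓ Γ j0 g.1 0))) = 0 := by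
        intro p hp16 hp13
        have h46 : p ∈ iSet ℓ 4 6 := (iSet16_split hp16).resolve_left hp13
        rw [(hfact46 p h46).1, (hfact46 p h46).2, zero_mulA, mulA_zero, smul_zero,
          smul_zero, sub_zero]
      rw [← Finset.sum_subset iSet13_sub hzero46, Finset.sum_congr rfl hterm,
        ← Finset.sum_smul, hlam1, smul_mulA, one_mulA] at h
      have h2 : (⇑μ g + ((∑ p ∈ iSet ℓ 1 3, cfD Γ μ p * (g.1 (bar ℓ p) - g.1 p)) +
          lam * g.1 0)) • X F ℓ Γ j0 g.1 0 = 0 := by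
        rw [add_smul, add_smul, mul_comm lam (g.1 0), ← smul_smul, h]
        abel
      exact (smul_eq_zero.1 h2).resolve_right (X_ne_zero g.2 zero_mem_jIdx)
    have hmuP : ∀ (p : ℕ) (g : ↥Γ), muP F ℓ Γ p g = g.1 (bar ℓ p) - g.1 p := fun p g => rfl
    have hsum0 : μ + ((∑ p ∈ iSet ℓ 1 3, cfD Γ μ p • muP F ℓ Γ p) +
        lam • muZero F Γ j0) = 0 := by
      refine DFunLike.ext _ _ fun g => ?_
      rw [AddMonoidHom.add_apply, AddMonoidHom.add_apply, AddMonoidHom.zero_apply,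
        AddMonoidHom.finset_sum_apply, AddMonoidHom.smul_apply]
      have hs : (∑ p ∈ iSet ℓ 1 3, (cfD Γ μ p • muP F ℓ Γ p) g) =
          ∑ p ∈ iSet ℓ 1 3, cfD Γ μ p * (g.1 (bar ℓ p) - g.1 p) :=
        Finset.sum_congr rfl fun p _ => by
          rw [AddMonoidHom.smul_apply, hmuP p g, smul_eq_mul]
      rw [hs, smul_eq_mul, ← hlam2 g]
      exact hkey g
    have hmem2 : μ ∈ H ⊓ spanMu F ℓ Γ j0 := by
      refine ⟨hμ, ?_⟩
      have heq : μ = -((∑ p ∈ iSet ℓ 1 3, cfD Γ μ p • muP F ℓ Γ p) +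
          lam • muZero F Γ j0) := eq_neg_of_add_eq_zero_left hsum0
      rw [heq]
      refine Submodule.neg_mem _ (Submodule.add_mem _ ?_ ?_)
      · exact Submodule.sum_mem _ fun p hp => Submodule.smul_mem _ _
          (Submodule.subset_span (Set.mem_insert_of_mem _ ⟨p, Finset.mem_coe.2 hp, rfl⟩))
      · exact Submodule.smul_mem _ _ (Submodule.subset_span (Set.mem_insert _ _))
    rw [hH2] at hmem2
    exact (Submodule.mem_bot F).1 hmem2
  have hcf0 : ∀ p, cfD Γ μ p = 0 := by
    intro p
    rw [cfD]
    split
    · rw [hmuzero]; rfl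
    · rfl
  have hlam0 : lam = 0 := hlam3 hmuzero
  have hu0 : u = 0 := by
    rw [hu, hlam0, Finset.sum_eq_zero fun p _ => by rw [hcf0, zero_smul]]
    norm_num
  refine ⟨?_, hmuzero, hu0⟩
  intro q hqS
  have hmem : (Pi.single q 1 : ℕ → ℕ) ∈ jIdx ℓ j0 := by
    rcases Finset.mem_union.1 hqS with hq | hq
    · rcases Finset.mem_union.1 hq with hq | hq
      · obtain ⟨p, hpI, hqe⟩ := mem_barSet_iff.1 hq
        norm_num at hpI
        rw [hqe, bar_of_le (by omega)]
        exact single_mem_jIdx (Or.inr (Or.inr ⟨by omega, by omega⟩))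
      · rcases Finset.mem_union.1 hq with hq | hq
        · rw [iSet, Finset.mem_Icc] at hq
          norm_num at hq
          exact single_mem_jIdx (Or.inl ⟨by omega, by omega⟩)
        · obtain ⟨p, hpI, hqe⟩ := mem_barSet_iff.1 hq
          norm_num at hpI
          rw [hqe, bar_of_le (by omega)]
          exact single_mem_jIdx (Or.inr (Or.inr ⟨by omega, by omega⟩))
    · rw [iSet, Finset.mem_Icc] at hq
      norm_num at hq
      exact single_mem_jIdx (Or.inr (Or.inl ⟨by omega, by omega⟩))
  have h := hzero (X F ℓ Γ j0 0 (Pi.single q 1))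
  rw [hmuzero, hu0, dmu_zero, brk_zero, add_zero, add_zero] at h
  rw [Finset.sum_eq_single_of_mem q hqS (fun p _ hpq => by
    rw [pt_X Γ.zero_mem hmem, Pi.single_eq_of_ne hpq 1]; simp)] at h
  rw [pt_X Γ.zero_mem hmem, Pi.single_eq_same, single_sub_self, Nat.cast_one, one_smul] at h
  exact (smul_eq_zero.1 h).resolve_right (X_ne_zero Γ.zero_mem zero_mem_jIdx)


end
end

section
/- (Claim 1) Let A₁'={x^{−σ_p}, x^{−σ_q,1_{[q̄]}} : p∈I_{2,3}, q∈I₅} and A₁=A₁' if 𝒥₀={0}, A₁=A₁'∪{1} if 𝒥₀=ℕ. For every y∈A₁ and every u∈𝒦 there exists v∈𝒦 such that u=[y,v] and, for every z∈A₁∖{y} with [z,u]=0, also [z,v]=0. In particular, ad y:𝒦→𝒦 is surjective for every y∈A₁. -/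
noncomputable section

variable (F : Type*) [Field F] (ℓ : ℕ → ℕ) (Γ : AddSubgroup (ℕ → F)) (j0 : Bool)

/-- The set `A₁`: the ad-locally-finite but not ad-semisimple basis elements
(`x^{−σ_p}` for `p ∈ I_{2,3}`, `x^{−σ_q,1_{[q̄]}}` for `q ∈ I₅`, plus `1` if `𝒥₀ = ℕ`). -/
def A1 (F : Type*) [Field F] (ℓ : ℕ → ℕ) (Γ : AddSubgroup (ℕ → F)) (j0 : Bool) :
    Set (CA F ℓ Γ j0) :=
  ((fun p => X F ℓ Γ j0 (-sgm F ℓ p) 0) '' ↑(iSet ℓ 2 3)) ∪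
    ((fun q => X F ℓ Γ j0 (-sgm F ℓ q) (Pi.single (bar ℓ q) 1)) '' ↑(iSet ℓ 5 5)) ∪
    {y | j0 = true ∧ y = X F ℓ Γ j0 0 0}

/-- The set `A₂`: the ad-semisimple elements
(`x^{−σ_p}` for `p ∈ I₁`, `x^{−σ_q,1_{[q̄]}}` for `q ∈ I₄`, `t^{1_{[r]}+1_{[r̄]}}` for
`r ∈ I₆`, plus `1` if `𝒥₀ = {0}`). -/
def A2 (F : Type*) [Field F] (ℓ : ℕ → ℕ) (Γ : AddSubgroup (ℕ → F)) (j0 : Bool) :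
    Set (CA F ℓ Γ j0) :=
  ((fun p => X F ℓ Γ j0 (-sgm F ℓ p) 0) '' ↑(iSet ℓ 1 1)) ∪
    ((fun q => X F ℓ Γ j0 (-sgm F ℓ q) (Pi.single (bar ℓ q) 1)) '' ↑(iSet ℓ 4 4)) ∪
    ((fun r => X F ℓ Γ j0 0 (Pi.single r 1 + Pi.single (bar ℓ r) 1)) '' ↑(iSet ℓ 6 6)) ∪
    {y | j0 = false ∧ y = X F ℓ Γ j0 0 0}

/-- The set `A₃`: `x^{2_{[p]}}` for `p ∈ I_{1,5}`, `t^{2_{[q]}}` for `q ∈ I₆`, plus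
`x^{2_{[0]}}` if `Γ₀ ≠ {0}` or `t₀` if `Γ₀ = {0}`. -/
def A3 (F : Type*) [Field F] (ℓ : ℕ → ℕ) (Γ : AddSubgroup (ℕ → F)) (j0 : Bool) :
    Set (CA F ℓ Γ j0) :=
  ((fun p => X F ℓ Γ j0 (Pi.single p (2 : F)) 0) '' ↑(iSet ℓ 1 5)) ∪
    ((fun q => X F ℓ Γ j0 0 (Pi.single q 2)) '' ↑(iSet ℓ 6 6)) ∪
    {y | ((∃ α ∈ Γ, α 0 ≠ 0) ∧ y = X F ℓ Γ j0 (Pi.single 0 (2 : F)) 0) ∨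
      ((∀ α ∈ Γ, α 0 = 0) ∧ y = X F ℓ Γ j0 0 (Pi.single 0 1))}

/-- The set `A₄`: `x^{2_{[p̄]}}` for `p ∈ I_{1,3}`, `t^{2_{[q̄]}}` for `q ∈ I_{4,6}`, plus
`x^{−2_{[0]}}` if `Γ₀ ≠ {0}`. -/
def A4 (F : Type*) [Field F] (ℓ : ℕ → ℕ) (Γ : AddSubgroup (ℕ → F)) (j0 : Bool) :
    Set (CA F ℓ Γ j0) :=
  ((fun p => X F ℓ Γ j0 (Pi.single (bar ℓ p) (2 : F)) 0) '' ↑(iSet ℓ 1 3)) ∪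
    ((fun q => X F ℓ Γ j0 0 (Pi.single (bar ℓ q) 2)) '' ↑(iSet ℓ 4 6)) ∪
    {y | (∃ α ∈ Γ, α 0 ≠ 0) ∧ y = X F ℓ Γ j0 (Pi.single 0 (-2 : F)) 0}

namespace C1

/-! ### ℕ-function shift lemmas -/

lemma fsub_comm (i : ℕ → ℕ) (r r' : ℕ) :
    (i - Pi.single r 1) - Pi.single r' 1 = (i - Pi.single r' 1) - Pi.single r 1 := by
  funext p; simp only [Pi.sub_apply]; omega

lemma fsub_of_zero {i : ℕ → ℕ} {r : ℕ} (h : i r = 0) : i - Pi.single r 1 = i := by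
  funext p; by_cases hp : p = r
  · subst hp; simp [Pi.sub_apply, h]
  · simp [Pi.sub_apply, Pi.single_apply, hp]

lemma fsub_add_cancel {i : ℕ → ℕ} {r : ℕ} (h : 1 ≤ i r) :
    (i - Pi.single r 1) + Pi.single r 1 = i := by
  funext p; by_cases hp : p = r
  · subst hp; simp only [Pi.add_apply, Pi.sub_apply, Pi.single_eq_same]; omega
  · simp [Pi.add_apply, Pi.sub_apply, Pi.single_apply, hp]

lemma fadd_sub_cancel (i : ℕ → ℕ) (r : ℕ) : (i + Pi.single r 1) - Pi.single r 1 = i := by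
  funext p; simp only [Pi.add_apply, Pi.sub_apply]; omega

lemma fadd_sub_comm {i : ℕ → ℕ} {r r' : ℕ} (h : r ≠ r') :
    (i + Pi.single r' 1) - Pi.single r 1 = (i - Pi.single r 1) + Pi.single r' 1 := by
  funext p; simp only [Pi.add_apply, Pi.sub_apply, Pi.single_apply]
  split_ifs <;> omega

lemma fsub_apply_ne {i : ℕ → ℕ} {r p : ℕ} (h : p ≠ r) :
    (i - Pi.single r 1 : ℕ → ℕ) p = i p := by
  simp [Pi.sub_apply, Pi.single_apply, h]

lemma fadd_apply_ne {i : ℕ → ℕ} {r p : ℕ} (h : p ≠ r) :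
    (i + Pi.single r 1 : ℕ → ℕ) p = i p := by
  simp [Pi.add_apply, Pi.single_apply, h]

/-! ### jIdx closure -/

variable {ℓ j0}

lemma jIdx_zero : (0 : ℕ → ℕ) ∈ jIdx ℓ j0 := ⟨fun _ => rfl, fun _ _ _ => rfl⟩

lemma jIdx_add {i j : ℕ → ℕ} (hi : i ∈ jIdx ℓ j0) (hj : j ∈ jIdx ℓ j0) :
    i + j ∈ jIdx ℓ j0 := by
  refine ⟨fun h => ?_, fun p hp hbad => ?_⟩
  · simp [Pi.add_apply, hi.1 h, hj.1 h]
  · simp [Pi.add_apply, hi.2 p hp hbad, hj.2 p hp hbad]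

lemma jIdx_sub {i : ℕ → ℕ} (hi : i ∈ jIdx ℓ j0) (r : ℕ) :
    i - Pi.single r 1 ∈ jIdx ℓ j0 := by
  refine ⟨fun h => ?_, fun p hp hbad => ?_⟩
  · simp [Pi.sub_apply, hi.1 h]
  · simp [Pi.sub_apply, hi.2 p hp hbad]

lemma jIdx_add_single {i : ℕ → ℕ} (hi : i ∈ jIdx ℓ j0) {r : ℕ}
    (h0 : r = 0 → j0 = true)
    (h1 : 1 ≤ r → ¬(r ∈ iSet ℓ 1 2 ∪ iSet ℓ 4 4 ∪ barSet ℓ (iSet ℓ 1 1) ∨ 2 * iot ℓ 6 < r)) :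
    i + Pi.single r 1 ∈ jIdx ℓ j0 := by
  refine ⟨fun h => ?_, fun p hp hbad => ?_⟩
  · rcases Nat.eq_zero_or_pos r with hr | hr
    · rw [h0 hr] at h; simp at h
    · rw [fadd_apply_ne (p := 0) (by omega), hi.1 h]
  · have hpr : p ≠ r := by rintro rfl; exact h1 hp hbad
    rw [fadd_apply_ne hpr, hi.2 p hp hbad]

end C1

namespace C1

set_option linter.unusedSectionVars false

variable {F : Type*} [Field F] [CharZero F] {ℓ : ℕ → ℕ} {Γ : AddSubgroup (ℕ → F)} {j0 : Bool}

lemma X_eq {α : ℕ → F} {i : ℕ → ℕ} (hα : α ∈ Γ) (hi : i ∈ jIdx ℓ j0) :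
    X F ℓ Γ j0 α i = Finsupp.single ((⟨α, hα⟩, ⟨i, hi⟩) : ↥Γ × ↥(jIdx ℓ j0)) 1 := by
  unfold X; exact dif_pos ⟨hα, hi⟩

variable (F ℓ Γ j0) in
abbrev Idx := ↥Γ × ↥(jIdx ℓ j0)

def bv (a : Idx F ℓ Γ j0) : CA F ℓ Γ j0 := Finsupp.single a 1

def opOf (Ψ : Idx F ℓ Γ j0 → CA F ℓ Γ j0) : Module.End F (CA F ℓ Γ j0) :=
  Finsupp.linearCombination F Ψ

lemma opOf_single (Ψ : Idx F ℓ Γ j0 → CA F ℓ Γ j0) (a : Idx F ℓ Γ j0) (c : F) :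
    opOf Ψ (Finsupp.single a c) = c • Ψ a :=
  Finsupp.linearCombination_single F c a

lemma opOf_bv (Ψ : Idx F ℓ Γ j0 → CA F ℓ Γ j0) (a : Idx F ℓ Γ j0) :
    opOf Ψ (bv a) = Ψ a := by rw [bv, opOf_single, one_smul]

lemma end_ext {T S : Module.End F (CA F ℓ Γ j0)} (h : ∀ a, T (bv a) = S (bv a)) : T = S := by
  apply Finsupp.lhom_ext; intro a b
  have hb : (Finsupp.single a b : CA F ℓ Γ j0) = b • bv a := by
    rw [bv, Finsupp.smul_single, smul_eq_mul, mul_one]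
  rw [hb, map_smul, map_smul, h]

/-- Lowered index. -/
def lo (a : Idx F ℓ Γ j0) (r : ℕ) : Idx F ℓ Γ j0 :=
  ⟨a.1, ⟨a.2.1 - Pi.single r 1, jIdx_sub a.2.2 r⟩⟩

def LowE (r : ℕ) : Module.End F (CA F ℓ Γ j0) :=
  opOf (fun a => (a.2.1 r : F) • bv (lo a r))

def DiagE (f : (ℕ → F) → (ℕ → ℕ) → F) : Module.End F (CA F ℓ Γ j0) :=
  opOf (fun a => f a.1.1 a.2.1 • bv a)

variable (ℓ j0) in
/-- allowed raising coordinates -/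
def GoodUp (r : ℕ) : Prop := ∀ i ∈ jIdx ℓ j0, i + Pi.single r 1 ∈ jIdx ℓ j0

def up (a : Idx F ℓ Γ j0) {r : ℕ} (hr : GoodUp ℓ j0 r) : Idx F ℓ Γ j0 :=
  ⟨a.1, ⟨a.2.1 + Pi.single r 1, hr _ a.2.2⟩⟩

def UpE {r : ℕ} (hr : GoodUp ℓ j0 r) : Module.End F (CA F ℓ Γ j0) :=
  opOf (fun a => ((a.2.1 r : F) + 1)⁻¹ • bv (up a hr))

def addIdx (a b : Idx F ℓ Γ j0) : Idx F ℓ Γ j0 :=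
  ⟨a.1 + b.1, ⟨a.2.1 + b.2.1, jIdx_add a.2.2 b.2.2⟩⟩

def ShiftE (a : Idx F ℓ Γ j0) : Module.End F (CA F ℓ Γ j0) :=
  opOf (fun b => bv (addIdx a b))

lemma LowE_bv (r : ℕ) (a : Idx F ℓ Γ j0) :
    LowE r (bv a) = (a.2.1 r : F) • bv (lo a r) := opOf_bv _ _

lemma DiagE_bv (f : (ℕ → F) → (ℕ → ℕ) → F) (a : Idx F ℓ Γ j0) :
    DiagE f (bv a) = f a.1.1 a.2.1 • bv a := opOf_bv _ _

lemma UpE_bv {r : ℕ} (hr : GoodUp ℓ j0 r) (a : Idx F ℓ Γ j0) :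
    (UpE hr : Module.End F (CA F ℓ Γ j0)) (bv a) = ((a.2.1 r : F) + 1)⁻¹ • bv (up a hr) :=
  opOf_bv _ _

lemma ShiftE_bv (a b : Idx F ℓ Γ j0) : ShiftE a (bv b) = bv (addIdx a b) := opOf_bv _ _

lemma idx_ext {a b : Idx F ℓ Γ j0} (h1 : a.1.1 = b.1.1) (h2 : a.2.1 = b.2.1) : a = b := by
  apply Prod.ext <;> [exact Subtype.ext h1; exact Subtype.ext h2]

/-! ### commutation lemmas -/

lemma comm_low_low {r r' : ℕ} :
    Commute (LowE r : Module.End F (CA F ℓ Γ j0)) (LowE r') := by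
  apply end_ext; intro a
  simp only [Module.End.mul_apply, LowE_bv, map_smul]
  by_cases h : r = r'
  · subst h; rfl
  · have e1 : (lo a r').2.1 r = a.2.1 r := fsub_apply_ne h
    have e2 : (lo a r).2.1 r' = a.2.1 r' := fsub_apply_ne (Ne.symm h)
    have e3 : lo (lo a r') r = lo (lo a r) r' := idx_ext rfl (fsub_comm _ _ _)
    rw [e1, e2, e3, smul_comm]

lemma comm_diag_low {f : (ℕ → F) → (ℕ → ℕ) → F} {r : ℕ}
    (hf : ∀ α i, f α (i + Pi.single r 1) = f α i) :
    Commute (DiagE f : Module.End F (CA F ℓ Γ j0)) (LowE r) := by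
  apply end_ext; intro a
  simp only [Module.End.mul_apply, LowE_bv, DiagE_bv, map_smul]
  by_cases h : a.2.1 r = 0
  · rw [h]; simp
  · have hfv : f (lo a r).1.1 (lo a r).2.1 = f a.1.1 a.2.1 := by
      have h2 : f a.1.1 ((a.2.1 - Pi.single r 1) + Pi.single r 1)
          = f a.1.1 (a.2.1 - Pi.single r 1) := hf _ _
      rw [fsub_add_cancel (by omega)] at h2
      exact h2.symm
    rw [hfv, smul_comm]

lemma comm_diag_up {f : (ℕ → F) → (ℕ → ℕ) → F} {r : ℕ} (hr : GoodUp ℓ j0 r)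
    (hf : ∀ α i, f α (i + Pi.single r 1) = f α i) :
    Commute (DiagE f : Module.End F (CA F ℓ Γ j0)) (UpE hr) := by
  apply end_ext; intro a
  simp only [Module.End.mul_apply, UpE_bv, DiagE_bv, map_smul]
  have hfv : f (up a hr).1.1 (up a hr).2.1 = f a.1.1 a.2.1 := hf a.1.1 a.2.1
  rw [hfv, smul_comm]

lemma comm_low_up {r r' : ℕ} (h : r ≠ r') (hr' : GoodUp ℓ j0 r') :
    Commute (LowE r : Module.End F (CA F ℓ Γ j0)) (UpE hr') := by
  apply end_ext; intro a
  simp only [Module.End.mul_apply, UpE_bv, LowE_bv, map_smul]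
  have e1 : (up a hr').2.1 r = a.2.1 r := fadd_apply_ne h
  have e2 : (lo a r).2.1 r' = a.2.1 r' := fsub_apply_ne (Ne.symm h)
  have e3 : lo (up a hr') r = up (lo a r) hr' :=
    idx_ext rfl (fadd_sub_comm h)
  rw [e1, e2, e3, smul_comm]

lemma low_up_id {r : ℕ} (hr : GoodUp ℓ j0 r) :
    (LowE r : Module.End F (CA F ℓ Γ j0)) * UpE hr = 1 := by
  apply end_ext; intro a
  simp only [Module.End.mul_apply, UpE_bv, LowE_bv, map_smul, Module.End.one_apply]
  have e1 : (up a hr).2.1 r = a.2.1 r + 1 := by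
    show (a.2.1 + Pi.single r 1 : ℕ → ℕ) r = _
    simp [Pi.add_apply]
  have e3 : lo (up a hr) r = a := idx_ext rfl (fadd_sub_cancel _ _)
  rw [e1, e3, smul_smul, Nat.cast_add_one,
    inv_mul_cancel₀ (Nat.cast_add_one_ne_zero _), one_smul]

lemma lowE_pow_bv_eq_zero {r : ℕ} {k : ℕ} {a : Idx F ℓ Γ j0} (h : a.2.1 r < k) :
    ((LowE r : Module.End F (CA F ℓ Γ j0)) ^ k) (bv a) = 0 := by
  induction k generalizing a with
  | zero => omega
  | succ n ih =>
    rw [pow_succ, Module.End.mul_apply, LowE_bv, map_smul]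
    by_cases h0 : a.2.1 r = 0
    · rw [h0]; simp
    · have : (lo a r).2.1 r < n := by
        show (a.2.1 - Pi.single r 1 : ℕ → ℕ) r < n
        simp only [Pi.sub_apply, Pi.single_eq_same]; omega
      rw [ih this, smul_zero]

end C1

namespace C1

set_option linter.unusedSectionVars false

variable {F : Type*} [Field F] [CharZero F] {ℓ : ℕ → ℕ} {Γ : AddSubgroup (ℕ → F)} {j0 : Bool}

lemma f_sub_invariant {f : (ℕ → F) → (ℕ → ℕ) → F} {r : ℕ}
    (hf : ∀ α i, f α (i + Pi.single r 1) = f α i) (α : ℕ → F) (i : ℕ → ℕ) :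
    f α (i - Pi.single r 1) = f α i := by
  by_cases h : i r = 0
  · rw [fsub_of_zero h]
  · conv_rhs => rw [← fsub_add_cancel (show 1 ≤ i r by omega)]
    rw [hf]

structure Pr (F : Type*) [Field F] (ℓ : ℕ → ℕ) (Γ : AddSubgroup (ℕ → F)) (j0 : Bool) where
  f : (ℕ → F) → (ℕ → ℕ) → F
  s : F
  c : F
  rp : ℕ
  rm : ℕ
  hs : s ≠ 0
  hne : rp ≠ rm
  hup : GoodUp ℓ j0 rp
  hfp : ∀ α i, f α (i + Pi.single rp 1) = f α i
  hfm : ∀ α i, f α (i + Pi.single rm 1) = f α i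

variable (P : Pr F ℓ Γ j0)

def Pr.N : Module.End F (CA F ℓ Γ j0) := P.s • LowE P.rp + P.c • LowE P.rm

def Pr.D : Module.End F (CA F ℓ Γ j0) := DiagE P.f + P.N

open Classical in
def Pr.opb (a : Idx F ℓ Γ j0) : Module.End F (CA F ℓ Γ j0) :=
  if P.f a.1.1 a.2.1 = 0 then
    ∑ k ∈ Finset.range (a.2.1 P.rm + 1),
      ((-P.c) ^ k * (P.s⁻¹) ^ (k + 1)) • (LowE P.rm ^ k * UpE P.hup ^ (k + 1))
  else
    ∑ k ∈ Finset.range (a.2.1 P.rp + a.2.1 P.rm + 1),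
      ((-1 : F) ^ k * ((P.f a.1.1 a.2.1)⁻¹) ^ (k + 1)) • P.N ^ k

def Pr.phib (a : Idx F ℓ Γ j0) : CA F ℓ Γ j0 := P.opb a (bv a)

def Pr.phi : Module.End F (CA F ℓ Γ j0) := opOf P.phib

lemma Pr.D_bv (a : Idx F ℓ Γ j0) :
    P.D (bv a) = P.f a.1.1 a.2.1 • bv a + P.s • ((a.2.1 P.rp : F) • bv (lo a P.rp))
      + P.c • ((a.2.1 P.rm : F) • bv (lo a P.rm)) := by
  simp only [Pr.D, Pr.N, LinearMap.add_apply, LinearMap.smul_apply, DiagE_bv, LowE_bv, add_assoc]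

lemma Pr.N_pow_bv_eq_zero {k : ℕ} {a : Idx F ℓ Γ j0}
    (h : a.2.1 P.rp + a.2.1 P.rm < k) : (P.N ^ k) (bv a) = 0 := by
  induction k generalizing a with
  | zero => omega
  | succ n ih =>
    rw [pow_succ, Module.End.mul_apply]
    have hN : P.N (bv a) = (P.s * (a.2.1 P.rp : F)) • bv (lo a P.rp)
        + (P.c * (a.2.1 P.rm : F)) • bv (lo a P.rm) := by
      simp only [Pr.N, LinearMap.add_apply, LinearMap.smul_apply, LowE_bv, smul_smul]
    rw [hN, map_add, map_smul, map_smul]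
    have hp : (P.N ^ n) (bv (lo a P.rp)) = 0 ∨ (a.2.1 P.rp : F) = 0 := by
      by_cases h0 : a.2.1 P.rp = 0
      · right; rw [h0, Nat.cast_zero]
      · left; apply ih
        have e1 : (lo a P.rp).2.1 P.rp = a.2.1 P.rp - 1 := by
          show (a.2.1 - Pi.single P.rp 1 : ℕ → ℕ) P.rp = _
          simp [Pi.sub_apply]
        have e2 : (lo a P.rp).2.1 P.rm = a.2.1 P.rm := fsub_apply_ne (Ne.symm P.hne)
        omega
    have hm : (P.N ^ n) (bv (lo a P.rm)) = 0 ∨ (a.2.1 P.rm : F) = 0 := by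
      by_cases h0 : a.2.1 P.rm = 0
      · right; rw [h0, Nat.cast_zero]
      · left; apply ih
        have e1 : (lo a P.rm).2.1 P.rm = a.2.1 P.rm - 1 := by
          show (a.2.1 - Pi.single P.rm 1 : ℕ → ℕ) P.rm = _
          simp [Pi.sub_apply]
        have e2 : (lo a P.rm).2.1 P.rp = a.2.1 P.rp := fsub_apply_ne P.hne
        omega
    rcases hp with hp | hp <;> rcases hm with hm | hm <;>
      simp [hp, hm]

lemma Pr.commute_diag_N : Commute (DiagE P.f) P.N :=
  ((comm_diag_low P.hfp).smul_right P.s).add_right ((comm_diag_low P.hfm).smul_right P.c)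

lemma Pr.commute_opb {T : Module.End F (CA F ℓ Γ j0)}
    (hTp : Commute T (LowE P.rp)) (hTm : Commute T (LowE P.rm))
    (hTU : Commute T (UpE P.hup)) (a : Idx F ℓ Γ j0) :
    Commute T (P.opb a) := by
  unfold Pr.opb
  split_ifs
  · exact Commute.sum_right _ _ _ fun k _ =>
      (((hTm.pow_right k).mul_right (hTU.pow_right (k + 1))).smul_right _)
  · exact Commute.sum_right _ _ _ fun k _ =>
      (((hTp.smul_right P.s).add_right (hTm.smul_right P.c)).pow_right k).smul_right _

lemma Pr.opb_congr {a b : Idx F ℓ Γ j0}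
    (hf : P.f a.1.1 a.2.1 = P.f b.1.1 b.2.1)
    (hrp : a.2.1 P.rp = b.2.1 P.rp) (hrm : a.2.1 P.rm = b.2.1 P.rm) :
    P.opb a = P.opb b := by
  unfold Pr.opb; rw [hf, hrp, hrm]

theorem Pr.D_phib (a : Idx F ℓ Γ j0) : P.D (P.phib a) = bv a := by
  have hGU : Commute (LowE P.rm : Module.End F (CA F ℓ Γ j0)) (UpE P.hup) :=
    comm_low_up (Ne.symm P.hne) P.hup
  by_cases hz : P.f a.1.1 a.2.1 = 0
  · -- zero eigenvalue case
    have hphib : P.phib a = ∑ k ∈ Finset.range (a.2.1 P.rm + 1),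
        ((-P.c) ^ k * (P.s⁻¹) ^ (k + 1)) • ((LowE P.rm ^ k * UpE P.hup ^ (k + 1) : Module.End F (CA F ℓ Γ j0)) (bv a)) := by
      rw [Pr.phib, Pr.opb, if_pos hz, LinearMap.sum_apply]
      simp only [LinearMap.smul_apply]
    rw [hphib, Pr.D, LinearMap.add_apply]
    have hdiag : DiagE P.f (∑ k ∈ Finset.range (a.2.1 P.rm + 1),
        ((-P.c) ^ k * (P.s⁻¹) ^ (k + 1)) • ((LowE P.rm ^ k * UpE P.hup ^ (k + 1) : Module.End F (CA F ℓ Γ j0)) (bv a))) = 0 := by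
      rw [map_sum]
      apply Finset.sum_eq_zero
      intro k _
      rw [map_smul]
      have hcom : Commute (DiagE P.f : Module.End F (CA F ℓ Γ j0))
          (LowE P.rm ^ k * UpE P.hup ^ (k + 1)) :=
        ((comm_diag_low P.hfm).pow_right k).mul_right ((comm_diag_up P.hup P.hfp).pow_right (k + 1))
      have : DiagE P.f (((LowE P.rm ^ k * UpE P.hup ^ (k + 1) : Module.End F (CA F ℓ Γ j0)) (bv a)))
          = (LowE P.rm ^ k * UpE P.hup ^ (k + 1) : Module.End F (CA F ℓ Γ j0)) (DiagE P.f (bv a)) := by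
        rw [← Module.End.mul_apply, ← Module.End.mul_apply, hcom.eq]
      rw [this, DiagE_bv, hz, zero_smul, map_zero, smul_zero]
    rw [hdiag, zero_add]
    set A : ℕ → CA F ℓ Γ j0 := fun k =>
      ((-P.c) ^ k * (P.s⁻¹) ^ k) • ((LowE P.rm ^ k * UpE P.hup ^ k : Module.End F (CA F ℓ Γ j0)) (bv a)) with hA
    have hNterm : ∀ k, P.N (((-P.c) ^ k * (P.s⁻¹) ^ (k + 1)) •
        ((LowE P.rm ^ k * UpE P.hup ^ (k + 1) : Module.End F (CA F ℓ Γ j0)) (bv a))) = A k - A (k + 1) := by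
      intro k
      have keyL : (LowE P.rp : Module.End F (CA F ℓ Γ j0)) * (LowE P.rm ^ k * UpE P.hup ^ (k + 1))
          = LowE P.rm ^ k * UpE P.hup ^ k := by
        rw [← mul_assoc, ((comm_low_low (r := P.rp) (r' := P.rm)).pow_right k).eq, mul_assoc,
          pow_succ' (UpE P.hup) k, ← mul_assoc (LowE P.rp), low_up_id P.hup, one_mul]
      have keyG : (LowE P.rm : Module.End F (CA F ℓ Γ j0)) * (LowE P.rm ^ k * UpE P.hup ^ (k + 1))
          = LowE P.rm ^ (k + 1) * UpE P.hup ^ (k + 1) := by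
        rw [← mul_assoc, ← pow_succ']
      rw [map_smul, Pr.N, LinearMap.add_apply, LinearMap.smul_apply, LinearMap.smul_apply,
        ← Module.End.mul_apply, ← Module.End.mul_apply, keyL, keyG]
      rw [smul_add, smul_smul, smul_smul]
      have c1 : (-P.c) ^ k * P.s⁻¹ ^ (k + 1) * P.s = (-P.c) ^ k * P.s⁻¹ ^ k := by
        have hs' : P.s ≠ 0 := P.hs
        rw [pow_succ]
        field_simp
        try ring
      have c2 : (-P.c) ^ k * P.s⁻¹ ^ (k + 1) * P.c = -((-P.c) ^ (k + 1) * P.s⁻¹ ^ (k + 1)) := by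
        rw [pow_succ]
        ring
      rw [c1, c2, hA]
      simp only [neg_smul, sub_eq_add_neg]
    rw [map_sum]
    rw [Finset.sum_congr rfl fun k _ => hNterm k, Finset.sum_range_sub' A]
    have hA0 : A 0 = bv a := by
      simp [hA]
    have hAm : A (a.2.1 P.rm + 1) = 0 := by
      rw [hA]
      simp only []
      have : ((LowE P.rm ^ (a.2.1 P.rm + 1) * UpE P.hup ^ (a.2.1 P.rm + 1) : Module.End F (CA F ℓ Γ j0)) (bv a)) = 0 := by
        rw [(hGU.pow_pow _ _).eq, Module.End.mul_apply,
          lowE_pow_bv_eq_zero (by omega), map_zero]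
      rw [this, smul_zero]
    rw [hA0, hAm, sub_zero]
  · -- nonzero eigenvalue case
    set lam := P.f a.1.1 a.2.1 with hlam
    have hphib : P.phib a = ∑ k ∈ Finset.range (a.2.1 P.rp + a.2.1 P.rm + 1),
        ((-1 : F) ^ k * (lam⁻¹) ^ (k + 1)) • (P.N ^ k) (bv a) := by
      rw [Pr.phib, Pr.opb, if_neg hz, LinearMap.sum_apply]
      simp only [LinearMap.smul_apply]
      rfl
    rw [hphib, Pr.D, LinearMap.add_apply]
    set T : ℕ → CA F ℓ Γ j0 := fun k =>
      ((-1 : F) ^ k * lam⁻¹ ^ k) • (P.N ^ k) (bv a) with hT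
    have hdiag : ∀ k, DiagE P.f ((P.N ^ k) (bv a)) = lam • (P.N ^ k) (bv a) := by
      intro k
      rw [← Module.End.mul_apply, (P.commute_diag_N.pow_right k).eq, Module.End.mul_apply,
        DiagE_bv, ← hlam, map_smul]
    have main : ∀ k, DiagE P.f (((-1 : F) ^ k * lam⁻¹ ^ (k + 1)) • (P.N ^ k) (bv a))
        + P.N (((-1 : F) ^ k * lam⁻¹ ^ (k + 1)) • (P.N ^ k) (bv a)) = T k - T (k + 1) := by
      intro k
      rw [map_smul, map_smul, hdiag k, smul_smul, ← Module.End.mul_apply, ← pow_succ']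
      have c1 : (-1 : F) ^ k * lam⁻¹ ^ (k + 1) * lam = (-1 : F) ^ k * lam⁻¹ ^ k := by
        rw [pow_succ]
        field_simp
        try ring
      have c2 : (-1 : F) ^ k * lam⁻¹ ^ (k + 1) = -((-1 : F) ^ (k + 1) * lam⁻¹ ^ (k + 1)) := by
        ring
      rw [c1, hT]
      simp only []
      rw [c2]
      simp only [neg_smul, sub_eq_add_neg]
    rw [map_sum, map_sum, ← Finset.sum_add_distrib]
    rw [Finset.sum_congr rfl fun k _ => main k, Finset.sum_range_sub' T]
    have hT0 : T 0 = bv a := by simp [hT]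
    have hTm : T (a.2.1 P.rp + a.2.1 P.rm + 1) = 0 := by
      rw [hT]
      simp only []
      rw [P.N_pow_bv_eq_zero (by omega), smul_zero]
    rw [hT0, hTm, sub_zero]

theorem Pr.D_phi (u : CA F ℓ Γ j0) : P.D (P.phi u) = u := by
  have : P.D * P.phi = 1 := by
    apply end_ext; intro a
    rw [Module.End.mul_apply, Pr.phi, opOf_bv, P.D_phib, Module.End.one_apply]
  calc P.D (P.phi u) = (P.D * P.phi) u := rfl
  _ = u := by rw [this, Module.End.one_apply]

end C1

namespace C1

set_option linter.unusedSectionVars false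

variable {F : Type*} [Field F] [CharZero F] {ℓ : ℕ → ℕ} {Γ : AddSubgroup (ℕ → F)} {j0 : Bool}

variable (P Q : Pr F ℓ Γ j0)

structure Compat : Prop where
  hpp : Q.rp ≠ P.rp
  hpm : Q.rp ≠ P.rm
  hmp : Q.rm ≠ P.rp
  hmm : Q.rm ≠ P.rm
  hPQp : ∀ α i, P.f α (i + Pi.single Q.rp 1) = P.f α i
  hPQm : ∀ α i, P.f α (i + Pi.single Q.rm 1) = P.f α i
  hQPp : ∀ α i, Q.f α (i + Pi.single P.rp 1) = Q.f α i
  hQPm : ∀ α i, Q.f α (i + Pi.single P.rm 1) = Q.f α i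

variable {P Q}

lemma diag_opb_comm (h : Compat P Q) (a : Idx F ℓ Γ j0) :
    DiagE Q.f (P.phib a) = Q.f a.1.1 a.2.1 • P.phib a := by
  have hc : Commute (DiagE Q.f) (P.opb a) :=
    P.commute_opb (comm_diag_low h.hQPp) (comm_diag_low h.hQPm)
      (comm_diag_up P.hup h.hQPp) a
  rw [Pr.phib, ← Module.End.mul_apply, hc.eq, Module.End.mul_apply, DiagE_bv, map_smul]

lemma low_opb_comm (h : Compat P Q) {r : ℕ} (hrp : r ≠ P.rp) (hrm : r ≠ P.rm)
    (hfr : ∀ α i, P.f α (i + Pi.single r 1) = P.f α i) (a : Idx F ℓ Γ j0) :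
    LowE r (P.phib a) = (a.2.1 r : F) • P.phib (lo a r) := by
  have hc : Commute (LowE r) (P.opb a) :=
    P.commute_opb (comm_low_low) (comm_low_low) (comm_low_up hrp P.hup) a
  rw [Pr.phib, ← Module.End.mul_apply, hc.eq, Module.End.mul_apply, LowE_bv, map_smul]
  congr 1
  rw [Pr.phib]
  congr 1
  apply P.opb_congr
  · exact (f_sub_invariant hfr a.1.1 a.2.1).symm
  · exact (fsub_apply_ne (Ne.symm hrp)).symm
  · exact (fsub_apply_ne (Ne.symm hrm)).symm

theorem comm_phi_D (h : Compat P Q) (u : CA F ℓ Γ j0) :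
    P.phi (Q.D u) = Q.D (P.phi u) := by
  have key : P.phi * Q.D = Q.D * P.phi := by
    apply end_ext; intro a
    have e1 := diag_opb_comm h a
    have e2 := low_opb_comm h h.hpp h.hpm h.hPQp a
    have e3 := low_opb_comm h h.hmp h.hmm h.hPQm a
    rw [Module.End.mul_apply, Module.End.mul_apply, Q.D_bv]
    simp only [map_add, map_smul, Pr.phi, opOf_bv]
    rw [Pr.D, Pr.N, LinearMap.add_apply, LinearMap.add_apply, LinearMap.smul_apply,
      LinearMap.smul_apply, e1, e2, e3, add_assoc]
  calc P.phi (Q.D u) = (P.phi * Q.D) u := rfl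
  _ = (Q.D * P.phi) u := by rw [key]
  _ = Q.D (P.phi u) := rfl

end C1

namespace C1

set_option linter.unusedSectionVars false

variable {F : Type*} [Field F] [CharZero F] {ℓ : ℕ → ℕ} {Γ : AddSubgroup (ℕ → F)} {j0 : Bool}

lemma iot_zero : iot ℓ 0 = 0 := by simp [iot]

lemma iot_le {i j : ℕ} (h : i ≤ j) : iot ℓ i ≤ iot ℓ j :=
  Finset.sum_le_sum_of_subset (Finset.Icc_subset_Icc_right h)

lemma mem_iSet {p i j : ℕ} : p ∈ iSet ℓ i j ↔ iot ℓ (i - 1) + 1 ≤ p ∧ p ≤ iot ℓ j :=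
  Finset.mem_Icc

lemma mem_barSet_iSet {p i j : ℕ} (hj : j ≤ 6) :
    p ∈ barSet ℓ (iSet ℓ i j) ↔
      iot ℓ (i - 1) + iot ℓ 6 + 1 ≤ p ∧ p ≤ iot ℓ j + iot ℓ 6 := by
  have hj6 : iot ℓ j ≤ iot ℓ 6 := iot_le hj
  constructor
  · intro hp
    obtain ⟨q, hq, rfl⟩ := Finset.mem_image.mp hp
    rw [mem_iSet] at hq
    rw [bar, if_pos (by omega)]
    omega
  · intro hp
    refine Finset.mem_image.mpr ⟨p - iot ℓ 6, mem_iSet.mpr (by omega), ?_⟩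
    rw [bar, if_pos (by omega)]
    omega

lemma mem_jSet {p i j : ℕ} (hj : j ≤ 6) :
    p ∈ jSet ℓ i j ↔ (iot ℓ (i - 1) + 1 ≤ p ∧ p ≤ iot ℓ j) ∨
      (iot ℓ (i - 1) + iot ℓ 6 + 1 ≤ p ∧ p ≤ iot ℓ j + iot ℓ 6) := by
  rw [jSet, Finset.mem_union, mem_iSet, mem_barSet_iSet hj]

lemma bad_iff (p : ℕ) :
    (p ∈ iSet ℓ 1 2 ∪ iSet ℓ 4 4 ∪ barSet ℓ (iSet ℓ 1 1) ∨ 2 * iot ℓ 6 < p) ↔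
      ((1 ≤ p ∧ p ≤ iot ℓ 2) ∨ (iot ℓ 3 + 1 ≤ p ∧ p ≤ iot ℓ 4) ∨
        (iot ℓ 6 + 1 ≤ p ∧ p ≤ iot ℓ 1 + iot ℓ 6) ∨ 2 * iot ℓ 6 < p) := by
  rw [Finset.mem_union, Finset.mem_union, mem_iSet, mem_iSet, mem_barSet_iSet (by norm_num)]
  simp only [show (1:ℕ)-1 = 0 by norm_num, show (2:ℕ)-1 = 1 by norm_num, show (4:ℕ)-1 = 3 by norm_num, show (5:ℕ)-1 = 4 by norm_num, show (6:ℕ)-1 = 5 by norm_num, iot_zero]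
  omega

/-- single coordinate vectors in `𝒥₁` -/
lemma single_mem_jIdx {r : ℕ} (h1 : 1 ≤ r)
    (h2 : ¬((1 ≤ r ∧ r ≤ iot ℓ 2) ∨ (iot ℓ 3 + 1 ≤ r ∧ r ≤ iot ℓ 4) ∨
      (iot ℓ 6 + 1 ≤ r ∧ r ≤ iot ℓ 1 + iot ℓ 6) ∨ 2 * iot ℓ 6 < r)) :
    (Pi.single r 1 : ℕ → ℕ) ∈ jIdx ℓ j0 := by
  refine ⟨fun _ => ?_, fun p hp hbad => ?_⟩
  · exact Pi.single_eq_of_ne (by omega) 1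
  · have : p ≠ r := by
      rintro rfl
      exact h2 ((bad_iff p).mp hbad)
    exact Pi.single_eq_of_ne this 1

lemma goodUp_of {r : ℕ} (h1 : 1 ≤ r)
    (h2 : ¬((1 ≤ r ∧ r ≤ iot ℓ 2) ∨ (iot ℓ 3 + 1 ≤ r ∧ r ≤ iot ℓ 4) ∨
      (iot ℓ 6 + 1 ≤ r ∧ r ≤ iot ℓ 1 + iot ℓ 6) ∨ 2 * iot ℓ 6 < r)) :
    GoodUp ℓ j0 r := by
  intro i hi
  exact jIdx_add hi (single_mem_jIdx h1 h2)

lemma goodUp_zero (h : j0 = true) : GoodUp ℓ j0 0 := by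
  intro i hi
  refine ⟨fun hf => (by rw [h] at hf; exact absurd hf (by simp)), fun p hp hbad => ?_⟩
  rw [fadd_apply_ne (by omega), hi.2 p hp hbad]

lemma sgm_23 {p : ℕ} (hp : p ∈ iSet ℓ 2 3) :
    sgm F ℓ p = -Pi.single p (1 : F) - Pi.single (p + iot ℓ 6) 1 := by
  rw [mem_iSet] at hp
  have h1 : iot ℓ 1 ≤ iot ℓ 3 := iot_le (by norm_num)
  have h3 : iot ℓ 3 ≤ iot ℓ 6 := iot_le (by norm_num)
  have hle : p ≤ iot ℓ 6 := by omega
  rw [sgm]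
  simp only [if_pos hle]
  rw [if_pos (mem_iSet.mpr (by simp only [show (1:ℕ)-1 = 0 by norm_num, show (2:ℕ)-1 = 1 by norm_num, show (4:ℕ)-1 = 3 by norm_num, show (5:ℕ)-1 = 4 by norm_num, show (6:ℕ)-1 = 5 by norm_num, iot_zero]; omega))]

lemma sgm_5 {q : ℕ} (hq : q ∈ iSet ℓ 5 5) : sgm F ℓ q = -Pi.single q (1 : F) := by
  rw [mem_iSet] at hq
  simp only [show (1:ℕ)-1 = 0 by norm_num, show (2:ℕ)-1 = 1 by norm_num, show (4:ℕ)-1 = 3 by norm_num, show (5:ℕ)-1 = 4 by norm_num, show (6:ℕ)-1 = 5 by norm_num, iot_zero] at hq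
  have h44 : iot ℓ 4 ≤ iot ℓ 4 := le_refl _
  have h34 : iot ℓ 3 ≤ iot ℓ 4 := iot_le (by norm_num)
  have h45 : iot ℓ 4 ≤ iot ℓ 5 := iot_le (by norm_num)
  have h56 : iot ℓ 5 ≤ iot ℓ 6 := iot_le (by norm_num)
  have h36 : iot ℓ 3 ≤ iot ℓ 6 := by omega
  have hle : q ≤ iot ℓ 6 := by omega
  rw [sgm]
  simp only [if_pos hle]
  rw [if_neg (by rw [mem_iSet]; simp only [show (1:ℕ)-1 = 0 by norm_num, show (2:ℕ)-1 = 1 by norm_num, show (4:ℕ)-1 = 3 by norm_num, show (5:ℕ)-1 = 4 by norm_num, show (6:ℕ)-1 = 5 by norm_num, iot_zero]; omega),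
    if_pos (mem_iSet.mpr (by simp only [show (1:ℕ)-1 = 0 by norm_num, show (2:ℕ)-1 = 1 by norm_num, show (4:ℕ)-1 = 3 by norm_num, show (5:ℕ)-1 = 4 by norm_num, show (6:ℕ)-1 = 5 by norm_num, iot_zero]; omega))]

end C1

namespace C1

set_option linter.unusedSectionVars false

variable {F : Type*} [Field F] [CharZero F] {ℓ : ℕ → ℕ} {Γ : AddSubgroup (ℕ → F)} {j0 : Bool}

lemma pstar_eq (p : ℕ) (u : CA F ℓ Γ j0) :
    pstar F ℓ Γ j0 p u = DiagE (fun α _ => α p) u := by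
  rw [pstar, DiagE, opOf, Finsupp.linearCombination_apply]
  apply Finsupp.sum_congr
  intro a _
  rw [← smul_smul]
  rfl

lemma pt_eq (p : ℕ) (u : CA F ℓ Γ j0) : pt F ℓ Γ j0 p u = LowE p u := by
  rw [pt, LowE, opOf, Finsupp.linearCombination_apply]
  apply Finsupp.sum_congr
  intro a _
  rw [X_eq a.1.2 (jIdx_sub a.2.2 p), ← smul_smul]
  rfl

lemma dd_eq (p : ℕ) (u : CA F ℓ Γ j0) :
    dd F ℓ Γ j0 p u
      = (DiagE (fun α _ => α p) + LowE p : Module.End F (CA F ℓ Γ j0)) u := by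
  rw [dd, pstar_eq, pt_eq, LinearMap.add_apply]

lemma mulA_zero_left (v : CA F ℓ Γ j0) : mulA F ℓ Γ j0 0 v = 0 :=
  Finsupp.sum_zero_index

lemma mulA_zero_right (u : CA F ℓ Γ j0) : mulA F ℓ Γ j0 u 0 = 0 := by
  rw [mulA]
  simp [Finsupp.sum_zero_index]

lemma mulA_single_left (a : Idx F ℓ Γ j0) (c : F) (v : CA F ℓ Γ j0) :
    mulA F ℓ Γ j0 (Finsupp.single a c) v = c • ShiftE a v := by
  rw [mulA, Finsupp.sum_single_index (by simp [Finsupp.sum])]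
  rw [ShiftE, opOf, Finsupp.linearCombination_apply, Finsupp.smul_sum]
  apply Finsupp.sum_congr
  intro b _
  rw [X_eq (add_mem a.1.2 b.1.2) (jIdx_add a.2.2 b.2.2), ← smul_smul]
  rfl

lemma shiftE_shiftE (a b : Idx F ℓ Γ j0) (v : CA F ℓ Γ j0) :
    ShiftE a (ShiftE b v) = ShiftE (addIdx a b) v := by
  have key : (ShiftE a * ShiftE b : Module.End F (CA F ℓ Γ j0)) = ShiftE (addIdx a b) := by
    apply end_ext; intro d
    rw [Module.End.mul_apply, ShiftE_bv, ShiftE_bv, ShiftE_bv]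
    congr 1
    exact idx_ext (add_assoc _ _ _).symm (add_assoc _ _ _).symm
  calc ShiftE a (ShiftE b v) = (ShiftE a * ShiftE b) v := rfl
  _ = ShiftE (addIdx a b) v := by rw [key]

def zIdx : Idx F ℓ Γ j0 := ⟨0, ⟨0, jIdx_zero⟩⟩

lemma shiftE_zero (v : CA F ℓ Γ j0) : ShiftE zIdx v = v := by
  have key : (ShiftE zIdx : Module.End F (CA F ℓ Γ j0)) = 1 := by
    apply end_ext; intro d
    rw [ShiftE_bv, Module.End.one_apply]
    congr 1
    exact idx_ext (zero_add _) (zero_add _)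
  rw [key, Module.End.one_apply]

lemma diagE_sub (f g : (ℕ → F) → (ℕ → ℕ) → F) :
    (DiagE (fun α i => f α i - g α i) : Module.End F (CA F ℓ Γ j0)) = DiagE f - DiagE g := by
  apply end_ext; intro a
  rw [LinearMap.sub_apply, DiagE_bv, DiagE_bv, DiagE_bv, sub_smul]

lemma diagE_smul (c : F) (f : (ℕ → F) → (ℕ → ℕ) → F) :
    (DiagE (fun α i => c * f α i) : Module.End F (CA F ℓ Γ j0)) = c • DiagE f := by
  apply end_ext; intro a
  rw [LinearMap.smul_apply, DiagE_bv, DiagE_bv, smul_smul]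

lemma diagE_zero {f : (ℕ → F) → (ℕ → ℕ) → F}
    (h : ∀ a : Idx F ℓ Γ j0, f a.1.1 a.2.1 = 0) :
    (DiagE f : Module.End F (CA F ℓ Γ j0)) = 0 := by
  apply end_ext; intro a
  rw [DiagE_bv, h a, zero_smul, LinearMap.zero_apply]

lemma shift_low (r : ℕ) (h0 : (0 : ℕ → F) ∈ Γ) (he : (Pi.single r 1 : ℕ → ℕ) ∈ jIdx ℓ j0)
    (v : CA F ℓ Γ j0) :
    ShiftE (⟨⟨0, h0⟩, ⟨Pi.single r 1, he⟩⟩ : Idx F ℓ Γ j0) (LowE r v)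
      = DiagE (fun _ i => (i r : F)) v := by
  have key : (ShiftE (⟨⟨0, h0⟩, ⟨Pi.single r 1, he⟩⟩ : Idx F ℓ Γ j0) * LowE r
      : Module.End F (CA F ℓ Γ j0)) = DiagE (fun _ i => (i r : F)) := by
    apply end_ext; intro a
    rw [Module.End.mul_apply, LowE_bv, map_smul, ShiftE_bv, DiagE_bv]
    by_cases h : a.2.1 r = 0
    · rw [h]; simp
    · have heq : addIdx (⟨⟨0, h0⟩, ⟨Pi.single r 1, he⟩⟩ : Idx F ℓ Γ j0) (lo a r) = a := by
        apply idx_ext (zero_add _)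
        show Pi.single r 1 + (a.2.1 - Pi.single r 1) = a.2.1
        rw [add_comm, fsub_add_cancel (by omega)]
      rw [heq]
  have := congrArg (fun T : Module.End F (CA F ℓ Γ j0) => T v) key
  simpa using this

lemma dd_bv (r : ℕ) (a : Idx F ℓ Γ j0) :
    dd F ℓ Γ j0 r (bv a) = a.1.1 r • bv a + (a.2.1 r : F) • bv (lo a r) := by
  rw [dd_eq, LinearMap.add_apply, DiagE_bv, LowE_bv]

lemma dd_bv_zero {r : ℕ} {a : Idx F ℓ Γ j0} (h1 : a.1.1 r = 0) (h2 : a.2.1 r = 0) :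
    dd F ℓ Γ j0 r (bv a) = 0 := by
  rw [dd_bv, h1, h2]; simp

lemma dd_bv_diag {r : ℕ} {a : Idx F ℓ Γ j0} (h2 : a.2.1 r = 0) :
    dd F ℓ Γ j0 r (bv a) = a.1.1 r • bv a := by
  rw [dd_bv, h2]; simp

lemma dd_bv_low {r : ℕ} {a : Idx F ℓ Γ j0} (h1 : a.1.1 r = 0) :
    dd F ℓ Γ j0 r (bv a) = (a.2.1 r : F) • bv (lo a r) := by
  rw [dd_bv, h1]; simp

lemma sum_single_finset (S : Finset ℕ) (p : ℕ) (c : F) :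
    ∑ r ∈ S, Pi.single p c r = if p ∈ S then c else 0 := by
  simp only [Pi.single_apply]
  exact Finset.sum_ite_eq' S p fun _ => c

lemma sum_single_finset_nat (S : Finset ℕ) (p : ℕ) :
    ∑ r ∈ S, ((Pi.single p 1 : ℕ → ℕ) r : F) = if p ∈ S then 1 else 0 := by
  simp only [Pi.single_apply, apply_ite (fun n : ℕ => (n : F)), Nat.cast_one, Nat.cast_zero]
  exact Finset.sum_ite_eq' S p fun _ => 1

lemma Dop_bv (a : Idx F ℓ Γ j0)
    (hmem : ∀ p ∈ iSet ℓ 6 6 ∪ barSet ℓ (iSet ℓ 4 6), (Pi.single p 1 : ℕ → ℕ) ∈ jIdx ℓ j0) :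
    Dop F ℓ Γ j0 (bv a) =
      ((∑ p ∈ jSet ℓ 1 3 ∪ iSet ℓ 4 5, a.1.1 p)
        + ∑ p ∈ iSet ℓ 6 6 ∪ barSet ℓ (iSet ℓ 4 6), (a.2.1 p : F)) • bv a := by
  rw [Dop]
  have h1 : ∑ p ∈ jSet ℓ 1 3 ∪ iSet ℓ 4 5, pstar F ℓ Γ j0 p (bv a)
      = (∑ p ∈ jSet ℓ 1 3 ∪ iSet ℓ 4 5, a.1.1 p) • bv a := by
    rw [Finset.sum_smul]
    apply Finset.sum_congr rfl
    intro p _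
    rw [pstar_eq, DiagE_bv]
  have h2 : ∑ p ∈ iSet ℓ 6 6 ∪ barSet ℓ (iSet ℓ 4 6),
      mulA F ℓ Γ j0 (X F ℓ Γ j0 0 (Pi.single p 1)) (pt F ℓ Γ j0 p (bv a))
      = (∑ p ∈ iSet ℓ 6 6 ∪ barSet ℓ (iSet ℓ 4 6), (a.2.1 p : F)) • bv a := by
    rw [Finset.sum_smul]
    apply Finset.sum_congr rfl
    intro p hp
    rw [pt_eq, X_eq Γ.zero_mem (hmem p hp), mulA_single_left, one_smul,
      shift_low p Γ.zero_mem (hmem p hp), DiagE_bv]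
  rw [h1, h2, add_smul]

end C1

namespace C1

set_option linter.unusedSectionVars false

variable {F : Type*} [Field F] [CharZero F] {ℓ : ℕ → ℕ} {Γ : AddSubgroup (ℕ → F)} {j0 : Bool}

lemma iot_facts (ℓ : ℕ → ℕ) : iot ℓ 0 = 0 ∧ iot ℓ 0 ≤ iot ℓ 1 ∧ iot ℓ 1 ≤ iot ℓ 2 ∧
    iot ℓ 2 ≤ iot ℓ 3 ∧ iot ℓ 3 ≤ iot ℓ 4 ∧ iot ℓ 4 ≤ iot ℓ 5 ∧ iot ℓ 5 ≤ iot ℓ 6 :=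
  ⟨iot_zero, iot_le (by norm_num), iot_le (by norm_num), iot_le (by norm_num),
    iot_le (by norm_num), iot_le (by norm_num), iot_le (by norm_num)⟩

lemma bar_eq {p : ℕ} (h : p ≤ iot ℓ 6) : bar ℓ p = p + iot ℓ 6 := if_pos h

lemma mem_iSet_23 {p : ℕ} (hp : p ∈ iSet ℓ 2 3) : iot ℓ 1 + 1 ≤ p ∧ p ≤ iot ℓ 3 := by
  rw [mem_iSet] at hp
  simpa using hp

lemma mem_iSet_55 {q : ℕ} (hq : q ∈ iSet ℓ 5 5) : iot ℓ 4 + 1 ≤ q ∧ q ≤ iot ℓ 5 := by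
  rw [mem_iSet] at hq
  simpa using hq

lemma mem_S2_good {p : ℕ} (hp : p ∈ iSet ℓ 6 6 ∪ barSet ℓ (iSet ℓ 4 6)) :
    (Pi.single p 1 : ℕ → ℕ) ∈ jIdx ℓ j0 := by
  obtain ⟨f0, f1, f2, f3, f4, f5, f6⟩ := iot_facts ℓ
  rcases Finset.mem_union.mp hp with h | h
  · rw [mem_iSet] at h
    simp only [show (6:ℕ)-1 = 5 from rfl] at h
    exact single_mem_jIdx (by omega) (by omega)
  · rw [mem_barSet_iSet (by norm_num)] at h
    simp only [show (4:ℕ)-1 = 3 from rfl] at h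
    exact single_mem_jIdx (by omega) (by omega)

lemma mulA_bv_left (a : Idx F ℓ Γ j0) (v : CA F ℓ Γ j0) :
    mulA F ℓ Γ j0 (bv a) v = ShiftE a v := by
  rw [bv, mulA_single_left, one_smul]

/-! ### the three parameter packs -/

def prOne (h : j0 = true) : Pr F ℓ Γ j0 where
  f := fun α _ => 2 * α 0
  s := 2
  c := 0
  rp := 0
  rm := 2 * iot ℓ 6 + 1
  hs := by norm_num
  hne := by omega
  hup := goodUp_zero h
  hfp := fun _ _ => rfl
  hfm := fun _ _ => rfl

def prP (p : ℕ) (hp : p ∈ iSet ℓ 2 3) (hℓ6 : 0 < iot ℓ 6) : Pr F ℓ Γ j0 where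
  f := fun α _ => α (p + iot ℓ 6) - α p
  s := 1
  c := -1
  rp := p + iot ℓ 6
  rm := p
  hs := one_ne_zero
  hne := by omega
  hup := by
    obtain ⟨f0, f1, f2, f3, f4, f5, f6⟩ := iot_facts ℓ
    obtain ⟨hp1, hp2⟩ := mem_iSet_23 hp
    exact goodUp_of (by omega) (by omega)
  hfp := fun _ _ => rfl
  hfm := fun _ _ => rfl

def prQ (q : ℕ) (hq : q ∈ iSet ℓ 5 5) (hℓ6 : 0 < iot ℓ 6) : Pr F ℓ Γ j0 where
  f := fun α i => (i (q + iot ℓ 6) : F) - α q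
  s := -1
  c := 0
  rp := q
  rm := 2 * iot ℓ 6 + 1 + q
  hs := by norm_num
  hne := by
    obtain ⟨hq1, hq2⟩ := mem_iSet_55 hq
    obtain ⟨f0, f1, f2, f3, f4, f5, f6⟩ := iot_facts ℓ
    omega
  hup := by
    obtain ⟨f0, f1, f2, f3, f4, f5, f6⟩ := iot_facts ℓ
    obtain ⟨hq1, hq2⟩ := mem_iSet_55 hq
    exact goodUp_of (by omega) (by omega)
  hfp := fun α i => by
    simp only [fadd_apply_ne (show q + iot ℓ 6 ≠ q by omega)]
  hfm := fun α i => by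
    obtain ⟨hq1, hq2⟩ := mem_iSet_55 hq
    obtain ⟨f0, f1, f2, f3, f4, f5, f6⟩ := iot_facts ℓ
    simp only [fadd_apply_ne (show q + iot ℓ 6 ≠ 2 * iot ℓ 6 + 1 + q by omega)]

/-! ### brk computations -/

lemma brk_one (h : j0 = true) (v : CA F ℓ Γ j0) :
    brk F ℓ Γ j0 (X F ℓ Γ j0 0 0) v = (prOne (Γ := Γ) h).D v := by
  have hy : X F ℓ Γ j0 0 0 = bv (zIdx : Idx F ℓ Γ j0) := X_eq Γ.zero_mem jIdx_zero
  have hz : ∀ r, dd F ℓ Γ j0 r (bv (zIdx : Idx F ℓ Γ j0)) = 0 := fun r =>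
    dd_bv_zero (by simp [zIdx]) (by simp [zIdx])
  rw [hy, brk]
  rw [Finset.sum_eq_zero (fun p _ => by
    rw [hz p, hz (bar ℓ p), mulA_zero_left, mulA_zero_left, sub_zero, mulA_zero_right])]
  have hDop : Dop F ℓ Γ j0 (bv (zIdx : Idx F ℓ Γ j0)) = 0 := by
    rw [Dop_bv _ (fun p hp => mem_S2_good hp)]
    have e1 : (∑ p ∈ jSet ℓ 1 3 ∪ iSet ℓ 4 5, (zIdx : Idx F ℓ Γ j0).1.1 p) = 0 :=
      Finset.sum_eq_zero fun p _ => by simp [zIdx]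
    have e2 : (∑ p ∈ iSet ℓ 6 6 ∪ barSet ℓ (iSet ℓ 4 6),
        ((zIdx : Idx F ℓ Γ j0).2.1 p : F)) = 0 :=
      Finset.sum_eq_zero fun p _ => by simp [zIdx]
    rw [e1, e2, add_zero, zero_smul]
  rw [hDop, sub_zero, hz 0, mulA_zero_left, sub_zero, zero_add]
  have hsm : (2 : F) • bv (zIdx : Idx F ℓ Γ j0) = Finsupp.single zIdx (2 : F) := by
    rw [bv, Finsupp.smul_single, smul_eq_mul, mul_one]
  rw [hsm, mulA_single_left, shiftE_zero, dd_eq]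
  show (2 : F) • ((DiagE (fun α _ => α 0) + LowE 0 : Module.End F (CA F ℓ Γ j0)) v) = _
  rw [Pr.D, Pr.N]
  show _ = (DiagE (fun α _ => 2 * α 0) + ((2 : F) • LowE 0
    + (0 : F) • LowE (2 * iot ℓ 6 + 1)) : Module.End F (CA F ℓ Γ j0)) v
  rw [diagE_smul (2 : F) (fun α _ => α 0), zero_smul, add_zero]
  simp only [LinearMap.add_apply, LinearMap.smul_apply, smul_add]

lemma brk_P {p : ℕ} (hℓ6 : 0 < iot ℓ 6)
    (h1 : (Pi.single p (1 : F) : ℕ → F) ∈ Γ)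
    (h2 : (Pi.single (p + iot ℓ 6) (1 : F) : ℕ → F) ∈ Γ)
    (hp : p ∈ iSet ℓ 2 3) (v : CA F ℓ Γ j0) :
    brk F ℓ Γ j0 (X F ℓ Γ j0 (-sgm F ℓ p) 0) v = (prP p hp hℓ6).D v := by
  obtain ⟨f0, f1, f2, f3, f4, f5, f6⟩ := iot_facts ℓ
  obtain ⟨hp1, hp2⟩ := mem_iSet_23 hp
  have hyα : (-sgm F ℓ p) = Pi.single p (1 : F) + Pi.single (p + iot ℓ 6) 1 := by
    rw [sgm_23 hp]; ring
  have hymem : Pi.single p (1 : F) + Pi.single (p + iot ℓ 6) 1 ∈ Γ := add_mem h1 h2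
  set aP : Idx F ℓ Γ j0 := ⟨⟨_, hymem⟩, ⟨0, jIdx_zero⟩⟩ with haP
  have hy : X F ℓ Γ j0 (-sgm F ℓ p) 0 = bv aP := by
    rw [hyα]; exact X_eq hymem jIdx_zero
  have hαval : ∀ r, aP.1.1 r
      = (Pi.single p (1 : F) : ℕ → F) r + (Pi.single (p + iot ℓ 6) (1 : F) : ℕ → F) r := by
    intro r
    rw [haP]
    rfl
  have hαo : ∀ r, r ≠ p → r ≠ p + iot ℓ 6 → aP.1.1 r = 0 := by
    intro r hr1 hr2
    rw [hαval, Pi.single_eq_of_ne hr1, Pi.single_eq_of_ne hr2, add_zero]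
  have hαp : aP.1.1 p = 1 := by
    rw [hαval, Pi.single_eq_same, Pi.single_eq_of_ne (by omega), add_zero]
  have hαpb : aP.1.1 (p + iot ℓ 6) = 1 := by
    rw [hαval, Pi.single_eq_same, Pi.single_eq_of_ne (by omega), zero_add]
  have hival : ∀ r, aP.2.1 r = 0 := by
    intro r
    rw [haP]
    rfl
  rw [hy, brk]
  have hpmem : p ∈ iSet ℓ 1 6 := by
    rw [mem_iSet]
    simp only [show (1:ℕ)-1 = 0 from rfl, iot_zero]
    omega
  have hside : ∀ b ∈ iSet ℓ 1 6, b ≠ p →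
      mulA F ℓ Γ j0 (X F ℓ Γ j0 (sgm F ℓ b) 0)
        (mulA F ℓ Γ j0 (dd F ℓ Γ j0 b (bv aP)) (dd F ℓ Γ j0 (bar ℓ b) v) -
          mulA F ℓ Γ j0 (dd F ℓ Γ j0 (bar ℓ b) (bv aP)) (dd F ℓ Γ j0 b v)) = 0 := by
    intro b hb hbp
    rw [mem_iSet] at hb
    simp only [show (1:ℕ)-1 = 0 from rfl, iot_zero] at hb
    rw [dd_bv_zero (hαo b hbp (by omega)) (hival b),
      bar_eq (by omega : b ≤ iot ℓ 6),
      dd_bv_zero (hαo (b + iot ℓ 6) (by omega) (by omega)) (hival _),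
      mulA_zero_left, mulA_zero_left, sub_zero, mulA_zero_right]
  rw [Finset.sum_eq_single_of_mem p hpmem hside]
  rw [bar_eq (by omega : p ≤ iot ℓ 6)]
  rw [dd_bv_diag (hival p), hαp, one_smul, dd_bv_diag (hival _), hαpb, one_smul]
  have hσmem : sgm F ℓ p ∈ Γ := by
    rw [sgm_23 hp]
    exact sub_mem (neg_mem h1) h2
  set aσ : Idx F ℓ Γ j0 := ⟨⟨_, hσmem⟩, ⟨0, jIdx_zero⟩⟩ with haσ
  have hXσ : X F ℓ Γ j0 (sgm F ℓ p) 0 = bv aσ := X_eq hσmem jIdx_zero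
  rw [hXσ, mulA_bv_left, mulA_bv_left, mulA_bv_left, map_sub, shiftE_shiftE, shiftE_shiftE]
  have hcanc : addIdx aσ aP = (zIdx : Idx F ℓ Γ j0) := by
    apply idx_ext
    · show sgm F ℓ p + (Pi.single p (1 : F) + Pi.single (p + iot ℓ 6) 1) = 0
      rw [sgm_23 hp]; ring
    · show (0 : ℕ → ℕ) + 0 = 0
      simp
  rw [hcanc, shiftE_zero, shiftE_zero]
  have hDop : Dop F ℓ Γ j0 (bv aP) = (2 : F) • bv aP := by
    rw [Dop_bv _ (fun r hr => mem_S2_good hr)]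
    have e1 : (∑ r ∈ jSet ℓ 1 3 ∪ iSet ℓ 4 5, aP.1.1 r) = 2 := by
      rw [Finset.sum_congr rfl fun r _ => hαval r, Finset.sum_add_distrib,
        sum_single_finset, sum_single_finset,
        if_pos (Finset.mem_union_left _ ((mem_jSet (by norm_num)).mpr (Or.inl
          ⟨by simp only [show (1:ℕ)-1 = 0 from rfl, iot_zero]; omega, by omega⟩))),
        if_pos (Finset.mem_union_left _ ((mem_jSet (by norm_num)).mpr (Or.inr
          ⟨by simp only [show (1:ℕ)-1 = 0 from rfl, iot_zero]; omega, by omega⟩)))]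
      norm_num
    have e2 : (∑ r ∈ iSet ℓ 6 6 ∪ barSet ℓ (iSet ℓ 4 6), (aP.2.1 r : F)) = 0 :=
      Finset.sum_eq_zero fun r _ => by rw [hival r, Nat.cast_zero]
    rw [e1, e2, add_zero]
  rw [hDop, sub_self, mulA_zero_left, dd_bv_zero (hαo 0 (by omega) (by omega)) (hival 0),
    mulA_zero_left, add_zero, sub_zero]
  rw [dd_eq, dd_eq, Pr.D, Pr.N]
  show _ = (DiagE (fun α _ => α (p + iot ℓ 6) - α p) + ((1 : F) • LowE (p + iot ℓ 6)
    + (-1 : F) • LowE p) : Module.End F (CA F ℓ Γ j0)) v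
  rw [diagE_sub (fun α _ => α (p + iot ℓ 6)) (fun α _ => α p)]
  simp only [LinearMap.add_apply, LinearMap.sub_apply, LinearMap.smul_apply]
  module

lemma brk_Q {q : ℕ} (hℓ6 : 0 < iot ℓ 6)
    (h1 : (Pi.single q (1 : F) : ℕ → F) ∈ Γ)
    (hΓ2 : ∀ α ∈ Γ, ∀ r ∈ iSet ℓ 6 6 ∪ barSet ℓ (iSet ℓ 4 6), α r = 0)
    (hq : q ∈ iSet ℓ 5 5) (v : CA F ℓ Γ j0) :
    brk F ℓ Γ j0 (X F ℓ Γ j0 (-sgm F ℓ q) (Pi.single (bar ℓ q) 1)) v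
      = (prQ q hq hℓ6).D v := by
  obtain ⟨f0, f1, f2, f3, f4, f5, f6⟩ := iot_facts ℓ
  obtain ⟨hq1, hq2⟩ := mem_iSet_55 hq
  have hbq : bar ℓ q = q + iot ℓ 6 := bar_eq (by omega)
  have hqb_mem : q + iot ℓ 6 ∈ iSet ℓ 6 6 ∪ barSet ℓ (iSet ℓ 4 6) := by
    apply Finset.mem_union_right
    rw [mem_barSet_iSet (by norm_num)]
    simp only [show (4:ℕ)-1 = 3 from rfl]
    omega
  have hyα : (-sgm F ℓ q) = Pi.single q (1 : F) := by rw [sgm_5 hq]; ring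
  have he : (Pi.single (q + iot ℓ 6) 1 : ℕ → ℕ) ∈ jIdx ℓ j0 := mem_S2_good hqb_mem
  set aQ : Idx F ℓ Γ j0 := ⟨⟨_, h1⟩, ⟨_, he⟩⟩ with haQ
  have hy : X F ℓ Γ j0 (-sgm F ℓ q) (Pi.single (bar ℓ q) 1) = bv aQ := by
    rw [hyα, hbq]; exact X_eq h1 he
  have hαval : ∀ r, aQ.1.1 r = (Pi.single q (1 : F) : ℕ → F) r := by
    intro r
    rw [haQ]
  have hival : ∀ r, aQ.2.1 r = (Pi.single (q + iot ℓ 6) 1 : ℕ → ℕ) r := by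
    intro r
    rw [haQ]
  have hαo : ∀ r, r ≠ q → aQ.1.1 r = 0 := fun r hr => by
    rw [hαval, Pi.single_eq_of_ne hr]
  have hαq : aQ.1.1 q = 1 := by rw [hαval, Pi.single_eq_same]
  have hio : ∀ r, r ≠ q + iot ℓ 6 → aQ.2.1 r = 0 := fun r hr => by
    rw [hival, Pi.single_eq_of_ne hr]
  have hiq : aQ.2.1 (q + iot ℓ 6) = 1 := by rw [hival, Pi.single_eq_same]
  rw [hy, brk]
  have hqmem : q ∈ iSet ℓ 1 6 := by
    rw [mem_iSet]
    simp only [show (1:ℕ)-1 = 0 from rfl, iot_zero]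
    omega
  have hside : ∀ b ∈ iSet ℓ 1 6, b ≠ q →
      mulA F ℓ Γ j0 (X F ℓ Γ j0 (sgm F ℓ b) 0)
        (mulA F ℓ Γ j0 (dd F ℓ Γ j0 b (bv aQ)) (dd F ℓ Γ j0 (bar ℓ b) v) -
          mulA F ℓ Γ j0 (dd F ℓ Γ j0 (bar ℓ b) (bv aQ)) (dd F ℓ Γ j0 b v)) = 0 := by
    intro b hb hbq'
    rw [mem_iSet] at hb
    simp only [show (1:ℕ)-1 = 0 from rfl, iot_zero] at hb
    rw [dd_bv_zero (hαo b hbq') (hio b (by omega)),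
      bar_eq (by omega : b ≤ iot ℓ 6),
      dd_bv_zero (hαo (b + iot ℓ 6) (by omega)) (hio (b + iot ℓ 6) (by omega)),
      mulA_zero_left, mulA_zero_left, sub_zero, mulA_zero_right]
  rw [Finset.sum_eq_single_of_mem q hqmem hside]
  rw [bar_eq (by omega : q ≤ iot ℓ 6)]
  rw [dd_bv_diag (hio q (by omega)), hαq, one_smul,
    dd_bv_low (hαo (q + iot ℓ 6) (by omega)), hiq, Nat.cast_one, one_smul]
  have hlo : lo aQ (q + iot ℓ 6)
      = (⟨⟨Pi.single q 1, h1⟩, ⟨0, jIdx_zero⟩⟩ : Idx F ℓ Γ j0) := by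
    rw [haQ]
    refine idx_ext rfl ?_
    show Pi.single (q + iot ℓ 6) 1 - Pi.single (q + iot ℓ 6) 1 = 0
    simp
  rw [hlo]
  have hσmem : sgm F ℓ q ∈ Γ := by
    rw [sgm_5 hq]; exact neg_mem h1
  set aσ : Idx F ℓ Γ j0 := ⟨⟨_, hσmem⟩, ⟨0, jIdx_zero⟩⟩ with haσ
  have hXσ : X F ℓ Γ j0 (sgm F ℓ q) 0 = bv aσ := X_eq hσmem jIdx_zero
  rw [hXσ, mulA_bv_left, mulA_bv_left, mulA_bv_left, map_sub, shiftE_shiftE, shiftE_shiftE]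
  have hcanc : addIdx aσ (⟨⟨_, h1⟩, ⟨0, jIdx_zero⟩⟩ : Idx F ℓ Γ j0)
      = (zIdx : Idx F ℓ Γ j0) := by
    apply idx_ext
    · show sgm F ℓ q + Pi.single q (1 : F) = 0
      rw [sgm_5 hq]; ring
    · show (0 : ℕ → ℕ) + 0 = 0
      simp
  have haE : addIdx aσ aQ
      = (⟨⟨0, Γ.zero_mem⟩, ⟨Pi.single (q + iot ℓ 6) 1, he⟩⟩ : Idx F ℓ Γ j0) := by
    apply idx_ext
    · show sgm F ℓ q + Pi.single q (1 : F) = 0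
      rw [sgm_5 hq]; ring
    · show (0 : ℕ → ℕ) + Pi.single (q + iot ℓ 6) 1 = Pi.single (q + iot ℓ 6) 1
      simp
  rw [hcanc, haE, shiftE_zero]
  -- dd at q̄ : the diagonal part dies on Γ
  have hdd : dd F ℓ Γ j0 (q + iot ℓ 6) v = LowE (q + iot ℓ 6) v := by
    rw [dd_eq]
    have : (DiagE (fun α _ => α (q + iot ℓ 6)) : Module.End F (CA F ℓ Γ j0)) = 0 :=
      diagE_zero fun a => hΓ2 a.1.1 a.1.2 _ hqb_mem
    rw [this, zero_add]
  rw [hdd, shift_low _ Γ.zero_mem he]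
  have hDop : Dop F ℓ Γ j0 (bv aQ) = (2 : F) • bv aQ := by
    rw [Dop_bv _ (fun r hr => mem_S2_good hr)]
    have e1 : (∑ r ∈ jSet ℓ 1 3 ∪ iSet ℓ 4 5, aQ.1.1 r) = 1 := by
      rw [Finset.sum_congr rfl fun r _ => hαval r]
      rw [sum_single_finset,
        if_pos (Finset.mem_union_right _ (mem_iSet.mpr (by
          simp only [show (4:ℕ)-1 = 3 from rfl]; omega)))]
    have e2 : (∑ r ∈ iSet ℓ 6 6 ∪ barSet ℓ (iSet ℓ 4 6), (aQ.2.1 r : F)) = 1 := by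
      rw [Finset.sum_congr rfl fun r _ => congrArg (fun n : ℕ => (n : F)) (hival r)]
      rw [sum_single_finset_nat, if_pos hqb_mem]
    rw [e1, e2]
    norm_num
  rw [hDop, sub_self, mulA_zero_left,
    dd_bv_zero (hαo 0 (by omega)) (hio 0 (by omega)), mulA_zero_left, add_zero, sub_zero]
  rw [dd_eq, Pr.D, Pr.N]
  show _ = (DiagE (fun α i => (i (q + iot ℓ 6) : F) - α q) + ((-1 : F) • LowE q
    + (0 : F) • LowE (2 * iot ℓ 6 + 1 + q)) : Module.End F (CA F ℓ Γ j0)) v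
  rw [diagE_sub (fun _ i => (i (q + iot ℓ 6) : F)) (fun α _ => α q)]
  simp only [LinearMap.add_apply, LinearMap.sub_apply, LinearMap.smul_apply]
  module

end C1

namespace C1

set_option linter.unusedSectionVars false

variable {F : Type*} [Field F] [CharZero F] {ℓ : ℕ → ℕ} {Γ : AddSubgroup (ℕ → F)} {j0 : Bool}

lemma compat_transfer {P Q : Pr F ℓ Γ j0} (h : Compat P Q) {u : CA F ℓ Γ j0}
    (hu : Q.D u = 0) : Q.D (P.phi u) = 0 := by
  rw [← comm_phi_D h, hu, map_zero]

lemma A1_cases {y : CA F ℓ Γ j0} (hy : y ∈ A1 F ℓ Γ j0) :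
    (∃ p, ∃ hp : p ∈ iSet ℓ 2 3, y = X F ℓ Γ j0 (-sgm F ℓ p) 0) ∨
    (∃ q, ∃ hq : q ∈ iSet ℓ 5 5, y = X F ℓ Γ j0 (-sgm F ℓ q) (Pi.single (bar ℓ q) 1)) ∨
    (j0 = true ∧ y = X F ℓ Γ j0 0 0) := by
  rcases hy with (h | h) | h
  · obtain ⟨p, hp, hyp⟩ := h
    exact Or.inl ⟨p, Finset.mem_coe.mp hp, hyp.symm⟩
  · obtain ⟨q, hq, hyq⟩ := h
    exact Or.inr (Or.inl ⟨q, Finset.mem_coe.mp hq, hyq.symm⟩)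
  · exact Or.inr (Or.inr h)

section compat

variable (hℓ6 : 0 < iot ℓ 6)

lemma compat_One_P (h : j0 = true) {p : ℕ} (hp : p ∈ iSet ℓ 2 3) :
    Compat (prOne (Γ := Γ) h) (prP p hp hℓ6) := by
  obtain ⟨f0, f1, f2, f3, f4, f5, f6⟩ := iot_facts ℓ
  obtain ⟨hp1, hp2⟩ := mem_iSet_23 hp
  exact ⟨by show p + iot ℓ 6 ≠ 0; omega, by show p + iot ℓ 6 ≠ 2 * iot ℓ 6 + 1; omega,
    by show p ≠ 0; omega, by show p ≠ 2 * iot ℓ 6 + 1; omega,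
    fun _ _ => rfl, fun _ _ => rfl, fun _ _ => rfl, fun _ _ => rfl⟩

lemma compat_One_Q (h : j0 = true) {q : ℕ} (hq : q ∈ iSet ℓ 5 5) :
    Compat (prOne (Γ := Γ) h) (prQ q hq hℓ6) := by
  obtain ⟨f0, f1, f2, f3, f4, f5, f6⟩ := iot_facts ℓ
  obtain ⟨hq1, hq2⟩ := mem_iSet_55 hq
  exact ⟨by show q ≠ 0; omega, by show q ≠ 2 * iot ℓ 6 + 1; omega,
    by show 2 * iot ℓ 6 + 1 + q ≠ 0; omega, by show 2 * iot ℓ 6 + 1 + q ≠ 2 * iot ℓ 6 + 1; omega,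
    fun _ _ => rfl, fun _ _ => rfl,
    fun α i => by simp only [prOne, prP, prQ, fadd_apply_ne (show q + iot ℓ 6 ≠ 0 by omega)],
    fun α i => by simp only [prOne, prP, prQ, fadd_apply_ne (show q + iot ℓ 6 ≠ 2 * iot ℓ 6 + 1 by omega)]⟩

lemma compat_P_One {p : ℕ} (hp : p ∈ iSet ℓ 2 3) (h : j0 = true) :
    Compat (prP p hp hℓ6) (prOne (Γ := Γ) h) := by
  obtain ⟨f0, f1, f2, f3, f4, f5, f6⟩ := iot_facts ℓ
  obtain ⟨hp1, hp2⟩ := mem_iSet_23 hp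
  exact ⟨by show 0 ≠ p + iot ℓ 6; omega, by show 0 ≠ p; omega,
    by show 2 * iot ℓ 6 + 1 ≠ p + iot ℓ 6; omega, by show 2 * iot ℓ 6 + 1 ≠ p; omega,
    fun _ _ => rfl, fun _ _ => rfl, fun _ _ => rfl, fun _ _ => rfl⟩

lemma compat_P_P {p p' : ℕ} (hp : p ∈ iSet ℓ 2 3) (hp' : p' ∈ iSet ℓ 2 3) (hne : p' ≠ p) :
    Compat (prP (Γ := Γ) (j0 := j0) p hp hℓ6) (prP p' hp' hℓ6) := by
  obtain ⟨f0, f1, f2, f3, f4, f5, f6⟩ := iot_facts ℓ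
  obtain ⟨hp1, hp2⟩ := mem_iSet_23 hp
  obtain ⟨hp1', hp2'⟩ := mem_iSet_23 hp'
  exact ⟨by show p' + iot ℓ 6 ≠ p + iot ℓ 6; omega, by show p' + iot ℓ 6 ≠ p; omega,
    by show p' ≠ p + iot ℓ 6; omega, by show p' ≠ p; omega,
    fun _ _ => rfl, fun _ _ => rfl, fun _ _ => rfl, fun _ _ => rfl⟩

lemma compat_P_Q {p q : ℕ} (hp : p ∈ iSet ℓ 2 3) (hq : q ∈ iSet ℓ 5 5) :
    Compat (prP (Γ := Γ) (j0 := j0) p hp hℓ6) (prQ q hq hℓ6) := by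
  obtain ⟨f0, f1, f2, f3, f4, f5, f6⟩ := iot_facts ℓ
  obtain ⟨hp1, hp2⟩ := mem_iSet_23 hp
  obtain ⟨hq1, hq2⟩ := mem_iSet_55 hq
  exact ⟨by show q ≠ p + iot ℓ 6; omega, by show q ≠ p; omega,
    by show 2 * iot ℓ 6 + 1 + q ≠ p + iot ℓ 6; omega,
    by show 2 * iot ℓ 6 + 1 + q ≠ p; omega,
    fun _ _ => rfl, fun _ _ => rfl,
    fun α i => by simp only [prOne, prP, prQ, fadd_apply_ne (show q + iot ℓ 6 ≠ p + iot ℓ 6 by omega)],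
    fun α i => by simp only [prOne, prP, prQ, fadd_apply_ne (show q + iot ℓ 6 ≠ p by omega)]⟩

lemma compat_Q_One {q : ℕ} (hq : q ∈ iSet ℓ 5 5) (h : j0 = true) :
    Compat (prQ q hq hℓ6) (prOne (Γ := Γ) h) := by
  obtain ⟨f0, f1, f2, f3, f4, f5, f6⟩ := iot_facts ℓ
  obtain ⟨hq1, hq2⟩ := mem_iSet_55 hq
  exact ⟨by show 0 ≠ q; omega, by show 0 ≠ 2 * iot ℓ 6 + 1 + q; omega,
    by show 2 * iot ℓ 6 + 1 ≠ q; omega, by show 2 * iot ℓ 6 + 1 ≠ 2 * iot ℓ 6 + 1 + q; omega,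
    fun α i => by simp only [prOne, prP, prQ, fadd_apply_ne (show q + iot ℓ 6 ≠ 0 by omega)],
    fun α i => by simp only [prOne, prP, prQ, fadd_apply_ne (show q + iot ℓ 6 ≠ 2 * iot ℓ 6 + 1 by omega)],
    fun _ _ => rfl, fun _ _ => rfl⟩

lemma compat_Q_P {q p : ℕ} (hq : q ∈ iSet ℓ 5 5) (hp : p ∈ iSet ℓ 2 3) :
    Compat (prQ (Γ := Γ) (j0 := j0) q hq hℓ6) (prP p hp hℓ6) := by
  obtain ⟨f0, f1, f2, f3, f4, f5, f6⟩ := iot_facts ℓ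
  obtain ⟨hq1, hq2⟩ := mem_iSet_55 hq
  obtain ⟨hp1, hp2⟩ := mem_iSet_23 hp
  exact ⟨by show p + iot ℓ 6 ≠ q; omega, by show p + iot ℓ 6 ≠ 2 * iot ℓ 6 + 1 + q; omega,
    by show p ≠ q; omega, by show p ≠ 2 * iot ℓ 6 + 1 + q; omega,
    fun α i => by simp only [prOne, prP, prQ, fadd_apply_ne (show q + iot ℓ 6 ≠ p + iot ℓ 6 by omega)],
    fun α i => by simp only [prOne, prP, prQ, fadd_apply_ne (show q + iot ℓ 6 ≠ p by omega)],
    fun _ _ => rfl, fun _ _ => rfl⟩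

lemma compat_Q_Q {q q' : ℕ} (hq : q ∈ iSet ℓ 5 5) (hq' : q' ∈ iSet ℓ 5 5) (hne : q' ≠ q) :
    Compat (prQ (Γ := Γ) (j0 := j0) q hq hℓ6) (prQ q' hq' hℓ6) := by
  obtain ⟨f0, f1, f2, f3, f4, f5, f6⟩ := iot_facts ℓ
  obtain ⟨hq1, hq2⟩ := mem_iSet_55 hq
  obtain ⟨hq1', hq2'⟩ := mem_iSet_55 hq'
  exact ⟨by show q' ≠ q; omega, by show q' ≠ 2 * iot ℓ 6 + 1 + q; omega,
    by show 2 * iot ℓ 6 + 1 + q' ≠ q; omega,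
    by show 2 * iot ℓ 6 + 1 + q' ≠ 2 * iot ℓ 6 + 1 + q; omega,
    fun α i => by simp only [prOne, prP, prQ, fadd_apply_ne (show q + iot ℓ 6 ≠ q' by omega)],
    fun α i => by simp only [prOne, prP, prQ, fadd_apply_ne (show q + iot ℓ 6 ≠ 2 * iot ℓ 6 + 1 + q' by omega)],
    fun α i => by simp only [prOne, prP, prQ, fadd_apply_ne (show q' + iot ℓ 6 ≠ q by omega)],
    fun α i => by simp only [prOne, prP, prQ, fadd_apply_ne (show q' + iot ℓ 6 ≠ 2 * iot ℓ 6 + 1 + q by omega)]⟩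

end compat

lemma singleP1_mem {p : ℕ}
    (hΓ1 : ∀ r ∈ jSet ℓ 1 3 ∪ iSet ℓ 4 5, (Pi.single r (1 : F) : ℕ → F) ∈ Γ)
    (hp : p ∈ iSet ℓ 2 3) : (Pi.single p (1 : F) : ℕ → F) ∈ Γ := by
  obtain ⟨f0, f1, f2, f3, f4, f5, f6⟩ := iot_facts ℓ
  obtain ⟨hp1, hp2⟩ := mem_iSet_23 hp
  exact hΓ1 p (Finset.mem_union_left _ ((mem_jSet (by norm_num)).mpr (Or.inl
    ⟨by simp only [show (1:ℕ)-1 = 0 from rfl, iot_zero]; omega, by omega⟩)))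

lemma singleP2_mem {p : ℕ}
    (hΓ1 : ∀ r ∈ jSet ℓ 1 3 ∪ iSet ℓ 4 5, (Pi.single r (1 : F) : ℕ → F) ∈ Γ)
    (hp : p ∈ iSet ℓ 2 3) : (Pi.single (p + iot ℓ 6) (1 : F) : ℕ → F) ∈ Γ := by
  obtain ⟨f0, f1, f2, f3, f4, f5, f6⟩ := iot_facts ℓ
  obtain ⟨hp1, hp2⟩ := mem_iSet_23 hp
  exact hΓ1 _ (Finset.mem_union_left _ ((mem_jSet (by norm_num)).mpr (Or.inr
    ⟨by simp only [show (1:ℕ)-1 = 0 from rfl, iot_zero]; omega, by omega⟩)))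

lemma singleQ_mem {q : ℕ}
    (hΓ1 : ∀ r ∈ jSet ℓ 1 3 ∪ iSet ℓ 4 5, (Pi.single r (1 : F) : ℕ → F) ∈ Γ)
    (hq : q ∈ iSet ℓ 5 5) : (Pi.single q (1 : F) : ℕ → F) ∈ Γ := by
  obtain ⟨f0, f1, f2, f3, f4, f5, f6⟩ := iot_facts ℓ
  obtain ⟨hq1, hq2⟩ := mem_iSet_55 hq
  exact hΓ1 q (Finset.mem_union_right _ (mem_iSet.mpr
    ⟨by simp only [show (4:ℕ)-1 = 3 from rfl]; omega, by omega⟩))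

end C1


open C1

/-- **Claim 1.** For every `y ∈ A₁` and `u ∈ 𝒦` there is `v ∈ 𝒦` with
`u = [y,v]`, and such that `[z,v] = 0` for every `z ∈ A₁∖{y}` with `[z,u] = 0`.
In particular `ad y` is surjective for every `y ∈ A₁`. -/

theorem A1_ad_surjective_with_compatible_preimages
    {F : Type*} [Field F] [CharZero F] (ℓ : ℕ → ℕ) (Γ : AddSubgroup (ℕ → F)) (j0 : Bool)
    (hℓ : 0 < iot ℓ 6)
    (hΓ1 : ∀ p ∈ jSet ℓ 1 3 ∪ iSet ℓ 4 5, (Pi.single p (1 : F) : ℕ → F) ∈ Γ)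
    (hΓ2 : ∀ α ∈ Γ, ∀ p ∈ iSet ℓ 6 6 ∪ barSet ℓ (iSet ℓ 4 6), α p = 0)
    (hΓ3 : ∀ α ∈ Γ, ∀ p, 2 * iot ℓ 6 < p → α p = 0)
    (hΓ0 : (∃ α ∈ Γ, α 0 ≠ 0) → (Pi.single 0 (1 : F) : ℕ → F) ∈ Γ)
    (hJ0 : j0 = false → ∃ α ∈ Γ, α 0 ≠ 0) :
    (∀ y ∈ A1 F ℓ Γ j0, ∀ u : CA F ℓ Γ j0, ∃ v : CA F ℓ Γ j0,
      u = brk F ℓ Γ j0 y v ∧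
        ∀ z ∈ A1 F ℓ Γ j0, z ≠ y → brk F ℓ Γ j0 z u = 0 → brk F ℓ Γ j0 z v = 0) ∧
    (∀ y ∈ A1 F ℓ Γ j0, Function.Surjective (brk F ℓ Γ j0 y)) := by
  have main : ∀ y ∈ A1 F ℓ Γ j0, ∀ u : CA F ℓ Γ j0, ∃ v : CA F ℓ Γ j0,
      u = brk F ℓ Γ j0 y v ∧
        ∀ z ∈ A1 F ℓ Γ j0, z ≠ y → brk F ℓ Γ j0 z u = 0 → brk F ℓ Γ j0 z v = 0 := by
    intro y hy u
    rcases A1_cases hy with ⟨p, hp, rfl⟩ | ⟨q, hq, rfl⟩ | ⟨hj0, rfl⟩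
    · -- y = x^{-σ_p}, p ∈ I_{2,3}
      set P : Pr F ℓ Γ j0 := prP p hp hℓ with hP
      refine ⟨P.phi u, ?_, ?_⟩
      · rw [brk_P hℓ (singleP1_mem hΓ1 hp) (singleP2_mem hΓ1 hp) hp]
        exact (P.D_phi u).symm
      · intro z hz hzy hzu
        rcases A1_cases hz with ⟨p', hp', rfl⟩ | ⟨q', hq', rfl⟩ | ⟨hj0, rfl⟩
        · have hnep : p' ≠ p := by rintro rfl; exact hzy rfl
          rw [brk_P hℓ (singleP1_mem hΓ1 hp') (singleP2_mem hΓ1 hp') hp'] at hzu ⊢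
          exact compat_transfer (compat_P_P hℓ hp hp' hnep) hzu
        · rw [brk_Q hℓ (singleQ_mem hΓ1 hq') hΓ2 hq'] at hzu ⊢
          exact compat_transfer (compat_P_Q hℓ hp hq') hzu
        · rw [brk_one hj0] at hzu ⊢
          exact compat_transfer (compat_P_One hℓ hp hj0) hzu
    · -- y = x^{-σ_q, 1_{q̄}}, q ∈ I₅
      set P : Pr F ℓ Γ j0 := prQ q hq hℓ with hP
      refine ⟨P.phi u, ?_, ?_⟩
      · rw [brk_Q hℓ (singleQ_mem hΓ1 hq) hΓ2 hq]
        exact (P.D_phi u).symm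
      · intro z hz hzy hzu
        rcases A1_cases hz with ⟨p', hp', rfl⟩ | ⟨q', hq', rfl⟩ | ⟨hj0, rfl⟩
        · rw [brk_P hℓ (singleP1_mem hΓ1 hp') (singleP2_mem hΓ1 hp') hp'] at hzu ⊢
          exact compat_transfer (compat_Q_P hℓ hq hp') hzu
        · have hneq : q' ≠ q := by rintro rfl; exact hzy rfl
          rw [brk_Q hℓ (singleQ_mem hΓ1 hq') hΓ2 hq'] at hzu ⊢
          exact compat_transfer (compat_Q_Q hℓ hq hq' hneq) hzu
        · rw [brk_one hj0] at hzu ⊢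
          exact compat_transfer (compat_Q_One hℓ hq hj0) hzu
    · -- y = 1
      set P : Pr F ℓ Γ j0 := prOne hj0 with hP
      refine ⟨P.phi u, ?_, ?_⟩
      · rw [brk_one hj0]
        exact (P.D_phi u).symm
      · intro z hz hzy hzu
        rcases A1_cases hz with ⟨p', hp', rfl⟩ | ⟨q', hq', rfl⟩ | ⟨hj0', rfl⟩
        · rw [brk_P hℓ (singleP1_mem hΓ1 hp') (singleP2_mem hΓ1 hp') hp'] at hzu ⊢
          exact compat_transfer (compat_One_P hℓ hj0 hp') hzu
        · rw [brk_Q hℓ (singleQ_mem hΓ1 hq') hΓ2 hq'] at hzu ⊢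
          exact compat_transfer (compat_One_Q hℓ hj0 hq') hzu
        · exact absurd rfl hzy
  refine ⟨main, fun y hy u => ?_⟩
  obtain ⟨v, hv, -⟩ := main y hy u
  exact ⟨v, hv.symm⟩


end
end
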